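/- arXiv:0708.4109 — 6 statements merged into one kernel-verified Lean document; each statement's English description precedes it below -/
import Mathlib

section
/- For α > 0, the integral ∫₀^∞ e^{-v²t}·(4α/((4πα)² + v²)) dv equals (e^{(4πα)²t}/2)·(1 - Φ(4πα√t)), where Φ is the error function Φ(x) = (2/√π)∫₀^x e^{-u²} du. -/
open MeasureTheory Real Filter Set Topology

lemma integrable_F (a s : ℝ) (ha : 0 < a) (hs : 0 < s) :
    IntegrableOn (fun v => Real.exp (-v ^ 2 * s) / (a ^ 2 + v ^ 2)) (Ioi (0:ℝ)) := by
  have h := ((integrable_exp_neg_mul_sq hs).integrableOn (s := Ioi (0:ℝ))).const_mul (1 / a ^ 2)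
  refine h.mono' ?_ ?_
  · apply Continuous.aestronglyMeasurable
    exact (Real.continuous_exp.comp (by continuity)).div (by continuity)
      (fun v => by positivity)
  · filter_upwards with v
    have h1 : 0 < a ^ 2 + v ^ 2 := by positivity
    rw [Real.norm_eq_abs, abs_of_nonneg (by positivity), div_le_iff₀ h1]
    have he : Real.exp (-v ^ 2 * s) = Real.exp (-s * v ^ 2) := by ring_nf
    rw [he]
    calc Real.exp (-s*v^2) = 1/a^2 * Real.exp (-s*v^2) * a^2 := by field_simp
    _ ≤ 1 / a ^ 2 * Real.exp (-s * v ^ 2) * (a ^ 2 + v ^ 2) := by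
        apply mul_le_mul_of_nonneg_left (by nlinarith) (by positivity)

lemma hasDerivAt_F (a s : ℝ) (ha : 0 < a) (hs : 0 < s) :
    IntegrableOn (fun v => -v ^ 2 * Real.exp (-v ^ 2 * s) / (a ^ 2 + v ^ 2)) (Ioi (0:ℝ)) ∧
    HasDerivAt (fun x => ∫ v in Ioi (0:ℝ), Real.exp (-v ^ 2 * x) / (a ^ 2 + v ^ 2))
      (∫ v in Ioi (0:ℝ), -v ^ 2 * Real.exp (-v ^ 2 * s) / (a ^ 2 + v ^ 2)) s := by
  have hmeas : ∀ᶠ x in 𝓝 s, AEStronglyMeasurable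
      (fun v => Real.exp (-v ^ 2 * x) / (a ^ 2 + v ^ 2)) (volume.restrict (Ioi (0:ℝ))) := by
    filter_upwards with x
    exact ((Real.continuous_exp.comp (by continuity)).div (by continuity)
      (fun v => by positivity)).aestronglyMeasurable
  have key := hasDerivAt_integral_of_dominated_loc_of_deriv_le (μ := volume.restrict (Ioi (0:ℝ)))
    (F := fun x v => Real.exp (-v ^ 2 * x) / (a ^ 2 + v ^ 2))
    (F' := fun x v => -v ^ 2 * Real.exp (-v ^ 2 * x) / (a ^ 2 + v ^ 2))
    (bound := fun v => Real.exp (-(s/2) * v ^ 2))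
    (Metric.ball_mem_nhds s (half_pos hs)) hmeas (integrable_F a s ha hs)
    ((Continuous.div (by continuity) (by continuity)
      (fun v => by positivity)).aestronglyMeasurable)
    ?_ ((integrable_exp_neg_mul_sq (half_pos hs)).integrableOn) ?_
  · exact key
  · filter_upwards with v
    intro x hx
    have hx2 : s/2 ≤ x := by
      have := abs_lt.mp (mem_ball_iff_norm.mp hx)
      linarith [this.1]
    have h1 : 0 < a ^ 2 + v ^ 2 := by positivity
    rw [Real.norm_eq_abs, abs_div, abs_of_nonneg (le_of_lt h1), abs_mul, abs_neg,
      abs_of_nonneg (sq_nonneg v), abs_of_nonneg (Real.exp_pos _).le, div_le_iff₀ h1]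
    have he : Real.exp (-v ^ 2 * x) ≤ Real.exp (-(s/2) * v ^ 2) := by
      apply Real.exp_le_exp.mpr; nlinarith [sq_nonneg v]
    calc v ^ 2 * Real.exp (-v ^ 2 * x) ≤ v ^ 2 * Real.exp (-(s/2) * v ^ 2) :=
          mul_le_mul_of_nonneg_left he (sq_nonneg v)
      _ ≤ Real.exp (-(s/2) * v ^ 2) * (a ^ 2 + v ^ 2) := by
          nlinarith [(Real.exp_pos (-(s/2) * v ^ 2)).le, sq_nonneg a, sq_nonneg v,
            mul_le_mul_of_nonneg_left (sq_nonneg a) (Real.exp_pos (-(s/2) * v ^ 2)).le]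
  · filter_upwards with v
    intro x hx
    have h : HasDerivAt (fun x => Real.exp (-v ^ 2 * x)) (-v ^ 2 * Real.exp (-v ^ 2 * x)) x := by
      have := ((hasDerivAt_id x).const_mul (-v ^ 2)).exp
      simpa [mul_comm] using this
    simpa [div_eq_mul_inv, mul_comm] using h.div_const (a ^ 2 + v ^ 2)

lemma Fderiv_eq (a s : ℝ) (ha : 0 < a) (hs : 0 < s) :
    ∫ v in Ioi (0:ℝ), -v ^ 2 * Real.exp (-v ^ 2 * s) / (a ^ 2 + v ^ 2) =
      a ^ 2 * (∫ v in Ioi (0:ℝ), Real.exp (-v ^ 2 * s) / (a ^ 2 + v ^ 2))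
        - Real.sqrt (π / s) / 2 := by
  have hgauss : ∫ v in Ioi (0:ℝ), Real.exp (-v ^ 2 * s) = Real.sqrt (π / s) / 2 := by
    rw [← integral_gaussian_Ioi s]; congr 1 with v; ring_nf
  rw [← hgauss, ← integral_const_mul, ← integral_sub ((integrable_F a s ha hs).const_mul _)
    ((integrable_exp_neg_mul_sq hs).integrableOn.congr_fun (fun v _ => by ring_nf) measurableSet_Ioi)]
  apply setIntegral_congr_fun measurableSet_Ioi
  intro v _
  have h1 : a ^ 2 + v ^ 2 ≠ 0 := by positivity
  field_simp
  ring

lemma hasDerivAt_D (a s : ℝ) (ha : 0 < a) (hs : 0 < s) :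
    HasDerivAt (fun x => Real.exp (-a ^ 2 * x) *
        (∫ v in Ioi (0:ℝ), Real.exp (-v ^ 2 * x) / (a ^ 2 + v ^ 2)) -
      π / (2 * a) * (1 - (2 / Real.sqrt π) *
        ∫ u in (0:ℝ)..(a * Real.sqrt x), Real.exp (-u ^ 2))) 0 s := by
  set F : ℝ → ℝ := fun x => ∫ v in Ioi (0:ℝ), Real.exp (-v ^ 2 * x) / (a ^ 2 + v ^ 2) with hF
  have h1 : HasDerivAt (fun x => Real.exp (-a ^ 2 * x)) (-a ^ 2 * Real.exp (-a ^ 2 * s)) s := by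
    simpa [mul_comm] using ((hasDerivAt_id s).const_mul (-a ^ 2)).exp
  have h2 : HasDerivAt F (a ^ 2 * F s - Real.sqrt (π / s) / 2) s := by
    rw [← Fderiv_eq a s ha hs]; exact (hasDerivAt_F a s ha hs).2
  have hprod := h1.mul h2
  have hin : HasDerivAt (fun x => a * Real.sqrt x) (a * (1 / (2 * Real.sqrt s))) s :=
    (Real.hasDerivAt_sqrt hs.ne').const_mul a
  have hcont : Continuous fun u : ℝ => Real.exp (-u ^ 2) :=
    Real.continuous_exp.comp (by continuity)
  have hout := (hcont.integral_hasStrictDerivAt 0 (a * Real.sqrt s)).hasDerivAt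
  have h3 : HasDerivAt (fun x => ∫ u in (0:ℝ)..(a * Real.sqrt x), Real.exp (-u ^ 2))
      (Real.exp (-(a * Real.sqrt s) ^ 2) * (a * (1 / (2 * Real.sqrt s)))) s :=
    by have := hout.comp s hin; exact this
  have h4 : HasDerivAt (fun x => π / (2 * a) * (1 - (2 / Real.sqrt π) *
      ∫ u in (0:ℝ)..(a * Real.sqrt x), Real.exp (-u ^ 2)))
      (π / (2 * a) * (0 - (2 / Real.sqrt π) *
        (Real.exp (-(a * Real.sqrt s) ^ 2) * (a * (1 / (2 * Real.sqrt s)))))) s :=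
    ((hasDerivAt_const s (1:ℝ)).sub (h3.const_mul (2 / Real.sqrt π))).const_mul (π / (2 * a))
  have key := hprod.sub h4
  convert key using 1
  · rfl
  · rfl
  · rfl
  have hes : Real.exp (-(a * Real.sqrt s) ^ 2) = Real.exp (-a ^ 2 * s) := by
    rw [mul_pow, Real.sq_sqrt hs.le]; ring_nf
  have hsq : Real.sqrt (π / s) = Real.sqrt π / Real.sqrt s := Real.sqrt_div pi_pos.le s
  have hπ : Real.sqrt π ≠ 0 := by positivity
  have hss : Real.sqrt s ≠ 0 := by positivity
  have hππ : (Real.sqrt π) ^ 2 = π := Real.sq_sqrt pi_pos.le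
  rw [hes, hsq]
  set p := Real.sqrt π with hp
  set q := Real.sqrt s with hq
  rw [← hππ]
  field_simp
  ring

lemma tendsto_D (a : ℝ) (ha : 0 < a) :
    Tendsto (fun s => Real.exp (-a ^ 2 * s) *
        (∫ v in Ioi (0:ℝ), Real.exp (-v ^ 2 * s) / (a ^ 2 + v ^ 2)) -
      π / (2 * a) * (1 - (2 / Real.sqrt π) *
        ∫ u in (0:ℝ)..(a * Real.sqrt s), Real.exp (-u ^ 2))) atTop (𝓝 0) := by
  have hA : Tendsto (fun s => Real.exp (-a ^ 2 * s) *
      (∫ v in Ioi (0:ℝ), Real.exp (-v ^ 2 * s) / (a ^ 2 + v ^ 2))) atTop (𝓝 0) := by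
    have hup : Tendsto (fun s : ℝ => 1 / a ^ 2 * (Real.sqrt (π / s) / 2)) atTop (𝓝 0) := by
      have h1 : Tendsto (fun s : ℝ => π / s) atTop (𝓝 0) := by
        simpa [div_eq_mul_inv] using tendsto_inv_atTop_zero.const_mul π
      have h2 : Tendsto (fun s : ℝ => Real.sqrt (π / s)) atTop (𝓝 0) := by
        simpa [Function.comp_def] using (Real.continuous_sqrt.tendsto 0).comp h1
      simpa only [zero_div, mul_zero] using (h2.div_const 2).const_mul (1 / a ^ 2)
    apply tendsto_of_tendsto_of_tendsto_of_le_of_le' tendsto_const_nhds hup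
    · filter_upwards [eventually_gt_atTop (0:ℝ)] with s hs
      apply mul_nonneg (Real.exp_pos _).le
      apply setIntegral_nonneg measurableSet_Ioi
      intro v _
      positivity
    · filter_upwards [eventually_gt_atTop (0:ℝ)] with s hs
      have hFle : (∫ v in Ioi (0:ℝ), Real.exp (-v ^ 2 * s) / (a ^ 2 + v ^ 2)) ≤
          ∫ v in Ioi (0:ℝ), 1 / a ^ 2 * Real.exp (-s * v ^ 2) := by
        apply setIntegral_mono_on (integrable_F a s ha hs)
          (((integrable_exp_neg_mul_sq hs).integrableOn).const_mul _) measurableSet_Ioi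
        intro v _
        have h1 : (0:ℝ) < a ^ 2 + v ^ 2 := by positivity
        rw [div_le_iff₀ h1]
        have he : Real.exp (-v ^ 2 * s) = Real.exp (-s * v ^ 2) := by ring_nf
        rw [he]
        calc Real.exp (-s*v^2) = 1/a^2 * Real.exp (-s*v^2) * a^2 := by field_simp
        _ ≤ 1 / a ^ 2 * Real.exp (-s * v ^ 2) * (a ^ 2 + v ^ 2) := by
            apply mul_le_mul_of_nonneg_left (by nlinarith) (by positivity)
      have hgauss : ∫ v in Ioi (0:ℝ), 1 / a ^ 2 * Real.exp (-s * v ^ 2) =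
          1 / a ^ 2 * (Real.sqrt (π / s) / 2) := by
        rw [integral_const_mul, integral_gaussian_Ioi s]
      calc Real.exp (-a ^ 2 * s) * (∫ v in Ioi (0:ℝ), Real.exp (-v ^ 2 * s) / (a ^ 2 + v ^ 2))
          ≤ 1 * (∫ v in Ioi (0:ℝ), Real.exp (-v ^ 2 * s) / (a ^ 2 + v ^ 2)) := by
            apply mul_le_mul_of_nonneg_right
            · exact Real.exp_le_one_iff.mpr (by nlinarith)
            · exact setIntegral_nonneg measurableSet_Ioi fun v _ => by positivity
        _ ≤ 1 / a ^ 2 * (Real.sqrt (π / s) / 2) := by rw [one_mul, ← hgauss]; exact hFle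
  have hB : Tendsto (fun s => π / (2 * a) * (1 - (2 / Real.sqrt π) *
      ∫ u in (0:ℝ)..(a * Real.sqrt s), Real.exp (-u ^ 2))) atTop (𝓝 0) := by
    have hint : Tendsto (fun s : ℝ => ∫ u in (0:ℝ)..(a * Real.sqrt s), Real.exp (-u ^ 2))
        atTop (𝓝 (Real.sqrt π / 2)) := by
      have hIoi : ∫ u in Ioi (0:ℝ), Real.exp (-u ^ 2) = Real.sqrt π / 2 := by
        have := integral_gaussian_Ioi 1
        simpa using this
      have hsqrt : Tendsto Real.sqrt atTop atTop := by
        have h := tendsto_rpow_atTop (by norm_num : (0:ℝ) < 1/2)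
        exact h.congr fun x => (Real.sqrt_eq_rpow x).symm
      have htend : Tendsto (fun s : ℝ => a * Real.sqrt s) atTop atTop :=
        hsqrt.const_mul_atTop ha
      have := intervalIntegral_tendsto_integral_Ioi 0
        (show IntegrableOn (fun u : ℝ => Real.exp (-u ^ 2)) (Ioi 0) by
          simpa using (integrable_exp_neg_mul_sq one_pos).integrableOn) htend
      rwa [hIoi] at this
    have : Tendsto (fun s : ℝ => π / (2 * a) * (1 - (2 / Real.sqrt π) *
        ∫ u in (0:ℝ)..(a * Real.sqrt s), Real.exp (-u ^ 2))) atTop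
        (𝓝 (π / (2 * a) * (1 - (2 / Real.sqrt π) * (Real.sqrt π / 2)))) :=
      (((hint.const_mul (2 / Real.sqrt π)).const_sub 1).const_mul _)
    have hval : π / (2 * a) * (1 - (2 / Real.sqrt π) * (Real.sqrt π / 2)) = 0 := by
      have hπ : Real.sqrt π ≠ 0 := by positivity
      field_simp
      simp
    rwa [hval] at this
  simpa using hA.sub hB

lemma D_eq_zero (a t : ℝ) (ha : 0 < a) (ht : 0 < t) :
    Real.exp (-a ^ 2 * t) *
        (∫ v in Ioi (0:ℝ), Real.exp (-v ^ 2 * t) / (a ^ 2 + v ^ 2)) -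
      π / (2 * a) * (1 - (2 / Real.sqrt π) *
        ∫ u in (0:ℝ)..(a * Real.sqrt t), Real.exp (-u ^ 2)) = 0 := by
  set D : ℝ → ℝ := fun x => Real.exp (-a ^ 2 * x) *
        (∫ v in Ioi (0:ℝ), Real.exp (-v ^ 2 * x) / (a ^ 2 + v ^ 2)) -
      π / (2 * a) * (1 - (2 / Real.sqrt π) *
        ∫ u in (0:ℝ)..(a * Real.sqrt x), Real.exp (-u ^ 2)) with hD
  have hconst : ∀ s, t ≤ s → D s = D t := by
    intro s hsle
    have h := constant_of_has_deriv_right_zero (f := D) (a := t) (b := s)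
      (fun x hx => (hasDerivAt_D a x ha (lt_of_lt_of_le ht hx.1)).continuousAt.continuousWithinAt)
      (fun x hx => (hasDerivAt_D a x ha (lt_of_lt_of_le ht hx.1)).hasDerivWithinAt)
    exact h s ⟨hsle, le_rfl⟩
  have h1 : Tendsto D atTop (𝓝 (D t)) := by
    apply Tendsto.congr' _ tendsto_const_nhds
    filter_upwards [eventually_ge_atTop t] with s hs
    exact (hconst s hs).symm
  have h0 : D t = 0 := tendsto_nhds_unique h1 (tendsto_D a ha)
  exact h0

lemma aux_main (a t : ℝ) (ha : 0 < a) (ht : 0 < t) :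
    ∫ v in Ioi (0:ℝ), Real.exp (-v ^ 2 * t) / (a ^ 2 + v ^ 2) =
      π / (2 * a) * Real.exp (a ^ 2 * t) *
        (1 - (2 / Real.sqrt π) * ∫ u in (0:ℝ)..(a * Real.sqrt t), Real.exp (-u ^ 2)) := by
  have h := D_eq_zero a t ha ht
  have he : Real.exp (-a ^ 2 * t) ≠ 0 := (Real.exp_pos _).ne'
  have hee : Real.exp (a ^ 2 * t) * Real.exp (-a ^ 2 * t) = 1 := by
    rw [← Real.exp_add]; ring_nf; exact Real.exp_zero
  have := sub_eq_zero.mp h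
  calc ∫ v in Ioi (0:ℝ), Real.exp (-v ^ 2 * t) / (a ^ 2 + v ^ 2)
      = Real.exp (a ^ 2 * t) * (Real.exp (-a ^ 2 * t) *
          ∫ v in Ioi (0:ℝ), Real.exp (-v ^ 2 * t) / (a ^ 2 + v ^ 2)) := by
        rw [← mul_assoc, hee, one_mul]
    _ = π / (2 * a) * Real.exp (a ^ 2 * t) *
        (1 - (2 / Real.sqrt π) * ∫ u in (0:ℝ)..(a * Real.sqrt t), Real.exp (-u ^ 2)) := by
        rw [this]; ring


/-- Trace of the relative heat operator for the one-point delta interaction in ℝ³: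
for `α > 0` and `t > 0`,
`∫₀^∞ e^{-v²t} · (4α/((4πα)² + v²)) dv = (e^{(4πα)²t}/2)·(1 - Φ(4πα√t))`,
where `Φ(x) = (2/√π)∫₀^x e^{-u²} du` is the error function. -/
theorem relative_heat_trace_one_delta (α t : ℝ) (hα : 0 < α) (ht : 0 < t) :
    ∫ v in Ioi (0:ℝ), Real.exp (-v ^ 2 * t) * (4 * α / ((4 * π * α) ^ 2 + v ^ 2)) =
      Real.exp ((4 * π * α) ^ 2 * t) / 2 *
        (1 - (2 / Real.sqrt π) *
          ∫ u in (0:ℝ)..(4 * π * α * Real.sqrt t), Real.exp (-u ^ 2)) := by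
  have ha : 0 < 4 * π * α := by positivity
  have hsplit : ∀ v : ℝ, Real.exp (-v ^ 2 * t) * (4 * α / ((4 * π * α) ^ 2 + v ^ 2)) =
      4 * α * (Real.exp (-v ^ 2 * t) / ((4 * π * α) ^ 2 + v ^ 2)) := by
    intro v; ring
  simp_rw [hsplit]
  rw [integral_const_mul, aux_main (4 * π * α) t ha ht]
  have hπ : π ≠ 0 := pi_pos.ne'
  have hα' : α ≠ 0 := hα.ne'
  field_simp
end

section
/- For α ≥ 0 and k in the upper half-plane (Im k > 0, k² in the resolvent set), the function x ↦ -e^{2ik|x|}/(4π|x|²(4πα - ik)) is integrable over ℝ³ and its integral equals 1/(2ik(4πα - ik)). -/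
open MeasureTheory Real Filter Set

open scoped Topology in
private lemma cexp_integrableOn_Ioi' {a : ℂ} (ha : a.re < 0) :
    IntegrableOn (fun x : ℝ => Complex.exp (a * x)) (Ioi (0:ℝ)) := by
  have hb : (0:ℝ) < -a.re := by linarith
  refine (exp_neg_integrableOn_Ioi 0 hb).mono'
    ((Complex.continuous_exp.comp
      (continuous_const.mul Complex.continuous_ofReal)).aestronglyMeasurable.restrict) ?_
  filter_upwards with x
  rw [Complex.norm_exp]
  simp [Complex.mul_re]

open scoped Topology in
private lemma cexp_integral_Ioi' {a : ℂ} (ha : a.re < 0) :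
    ∫ x in Ioi (0:ℝ), Complex.exp (a * x) = -(1/a) := by
  have ha0 : a ≠ 0 := fun h => by simp [h] at ha
  have D : ∀ x ∈ Ici (0:ℝ), HasDerivAt (fun y : ℝ => Complex.exp (a * y) / a)
      (Complex.exp (a * x)) x := by
    intro x _
    conv => congr
    rw [← mul_div_cancel_right₀ (Complex.exp (a * x)) ha0]
    apply ((Complex.hasDerivAt_exp _).comp x _).div_const a
    simpa only [mul_one, id_eq] using ((hasDerivAt_id (x : ℂ)).const_mul _).comp_ofReal
  have T : Tendsto (fun x : ℝ => Complex.exp (a * x) / a) atTop (𝓝 0) := by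
    rw [tendsto_zero_iff_norm_tendsto_zero]
    have h2 : Tendsto (fun x : ℝ => (-a.re) * x) atTop atTop :=
      Tendsto.const_mul_atTop (by linarith) tendsto_id
    have h1 : Tendsto (fun x : ℝ => Real.exp (a.re * x) / ‖a‖) atTop (𝓝 0) := by
      have h3 : Tendsto (fun x : ℝ => Real.exp (-((-a.re) * x))) atTop (𝓝 0) :=
        Real.tendsto_exp_atBot.comp (tendsto_neg_atBot_iff.mpr h2)
      simpa using h3.div_const ‖a‖
    refine h1.congr fun x => ?_
    rw [eq_comm, norm_div, Complex.norm_exp]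
    simp [Complex.mul_re]
  have := integral_Ioi_of_hasDerivAt_of_tendsto' D (cexp_integrableOn_Ioi' ha) T
  simpa using this


/-- Trace of the difference of resolvents for the one-point delta interaction in ℝ³:
for `α ≥ 0` and `Im k > 0`, the diagonal of the difference of resolvent kernels
`x ↦ -e^{2ik|x|}/(4π|x|²(4πα - ik))` is integrable over ℝ³ and its integral equals
`1/(2ik(4πα - ik))`. -/
theorem relative_resolvent_trace_one_delta (α : ℝ) (hα : 0 ≤ α) (k : ℂ) (hk : 0 < k.im) :
    Integrable (fun x : EuclideanSpace ℝ (Fin 3) =>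
        -Complex.exp (2 * Complex.I * k * ‖x‖) /
          (4 * π * ‖x‖ ^ 2 * (4 * π * α - Complex.I * k))) ∧
    ∫ x : EuclideanSpace ℝ (Fin 3),
        -Complex.exp (2 * Complex.I * k * ‖x‖) /
          (4 * π * ‖x‖ ^ 2 * (4 * π * α - Complex.I * k)) =
      1 / (2 * Complex.I * k * (4 * π * α - Complex.I * k)) := by

  have hπ : (0:ℝ) < π := Real.pi_pos
  have hπc : (π:ℂ) ≠ 0 := Complex.ofReal_ne_zero.mpr hπ.ne'
  set c : ℂ := 4 * π * α - Complex.I * k with hc_def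
  set a : ℂ := 2 * Complex.I * k with ha_def
  have hcre : 0 < c.re := by
    have : c.re = 4 * π * α + k.im := by simp [hc_def, Complex.mul_re]
    rw [this]; positivity
  have hc : c ≠ 0 := fun h => by simp [h] at hcre
  have hare : a.re = -(2 * k.im) := by simp [ha_def, Complex.mul_re]
  have ha : a.re < 0 := by rw [hare]; linarith
  have ha0 : a ≠ 0 := fun h => by rw [h] at hare; simp at hare; linarith
  set f : ℝ → ℂ := fun r => -Complex.exp (a * r) / (4 * π * r ^ 2 * c) with hf_def
  -- integrability of r ↦ r² • f r on (0, ∞)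
  have step1 : Integrable (fun r : ℝ => r ^ 2 • f r) (volume.restrict (Ioi (0:ℝ))) := by
    have hbase := (cexp_integrableOn_Ioi' ha).const_mul (-(1 / (4 * π * c)))
    refine hbase.congr ?_
    filter_upwards [ae_restrict_mem measurableSet_Ioi] with r hr
    have hr0 : (r:ℂ) ≠ 0 := by exact_mod_cast (ne_of_gt hr)
    simp only [hf_def, Complex.real_smul, Complex.ofReal_pow]
    field_simp
  have step2 : Integrable (fun r : (Ioi (0:ℝ)) => ((r : ℝ)) ^ 2 • f r)
      (Measure.comap Subtype.val volume) := by
    have h := (MeasurableEmbedding.subtype_coe (measurableSet_Ioi (a := (0:ℝ)))).integrable_map_iff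
      (g := fun r : ℝ => r ^ 2 • f r) (μ := (volume : Measure ℝ).comap Subtype.val)
    rw [map_comap_subtype_coe measurableSet_Ioi] at h
    exact h.mp step1
  have step3 : Integrable (fun r : (Ioi (0:ℝ)) => f r) (Measure.volumeIoiPow 2) := by
    rw [Measure.volumeIoiPow, integrable_withDensity_iff_integrable_smul'
      ((measurable_subtype_coe.pow_const 2).ennreal_ofReal)
      (Eventually.of_forall fun r => ENNReal.ofReal_lt_top)]
    refine step2.congr (Eventually.of_forall fun r => ?_)
    dsimp only
    rw [ENNReal.toReal_ofReal (by positivity)]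
  have hdim : Module.finrank ℝ (EuclideanSpace ℝ (Fin 3)) = 3 := by
    simp [finrank_euclideanSpace_fin]
  have step4 : Integrable
      (fun p : Metric.sphere (0 : EuclideanSpace ℝ (Fin 3)) 1 × Ioi (0:ℝ) => f p.2)
      ((volume : Measure (EuclideanSpace ℝ (Fin 3))).toSphere.prod
        (Measure.volumeIoiPow (Module.finrank ℝ (EuclideanSpace ℝ (Fin 3)) - 1))) := by
    rw [hdim]
    have := (integrable_const (c := (1:ℂ))
      (μ := (volume : Measure (EuclideanSpace ℝ (Fin 3))).toSphere)).mul_prod step3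
    simpa using this
  have step5 : Integrable
      (fun x : ({(0 : EuclideanSpace ℝ (Fin 3))}ᶜ : Set (EuclideanSpace ℝ (Fin 3))) => f ‖x.1‖)
      (Measure.comap Subtype.val volume) := by
    have h := ((Measure.measurePreserving_homeomorphUnitSphereProd
        (volume : Measure (EuclideanSpace ℝ (Fin 3)))).integrable_comp_emb
      (Homeomorph.measurableEmbedding _)).mpr step4
    exact h.congr (Eventually.of_forall fun x => by simp [homeomorphUnitSphereProd_apply_snd_coe])
  have hInt : Integrable (fun x : EuclideanSpace ℝ (Fin 3) => f ‖x‖) volume := by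
    have h := (MeasurableEmbedding.subtype_coe
      (measurableSet_singleton (0 : EuclideanSpace ℝ (Fin 3))).compl).integrable_map_iff
      (g := fun x : EuclideanSpace ℝ (Fin 3) => f ‖x‖)
      (μ := (volume : Measure (EuclideanSpace ℝ (Fin 3))).comap Subtype.val)
    rw [map_comap_subtype_coe (measurableSet_singleton _).compl,
      restrict_compl_singleton] at h
    exact h.mpr step5
  clear_value f a c
  -- volume of the unit ball
  have hvol : ((volume : Measure (EuclideanSpace ℝ (Fin 3))) (Metric.ball 0 1)).toReal
      = 4 * π / 3 := by
    rw [EuclideanSpace.volume_ball]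
    have hΓ : Real.Gamma (((Fintype.card (Fin 3) : ℕ) : ℝ) / 2 + 1) = 3 * Real.sqrt π / 4 := by
      rw [show (((Fintype.card (Fin 3) : ℕ) : ℝ) / 2 + 1) = 1/2 + 1 + 1 by
        simp [Fintype.card_fin]; norm_num]
      rw [Real.Gamma_add_one (by norm_num), Real.Gamma_add_one (by norm_num),
        Real.Gamma_one_half_eq]
      ring
    rw [hΓ]
    have h3 : Real.sqrt π ^ Fintype.card (Fin 3) = π * Real.sqrt π := by
      rw [Fintype.card_fin, pow_succ, sq_sqrt hπ.le]
    rw [h3]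
    have hs : (0:ℝ) < Real.sqrt π := Real.sqrt_pos.mpr hπ
    rw [ENNReal.ofReal_one, one_pow, one_mul, ENNReal.toReal_ofReal (by positivity)]
    field_simp
  -- the radial integral
  have hJ : ∫ y in Ioi (0:ℝ),
      y ^ (Module.finrank ℝ (EuclideanSpace ℝ (Fin 3)) - 1) • f y = 1 / (4 * π * a * c) := by
    rw [hdim]
    rw [setIntegral_congr_fun measurableSet_Ioi
      (g := fun y : ℝ => -(1 / (4 * π * c)) * Complex.exp (a * y)) ?_]
    · rw [integral_const_mul, cexp_integral_Ioi' ha]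
      field_simp
    · intro y hy
      have hy0 : (y:ℂ) ≠ 0 := by exact_mod_cast (ne_of_gt hy)
      simp only [hf_def, Complex.real_smul, Complex.ofReal_pow]
      field_simp
  have key := integral_fun_norm_addHaar (volume : Measure (EuclideanSpace ℝ (Fin 3))) f
  have hint : ∫ x : EuclideanSpace ℝ (Fin 3), f ‖x‖ = 1 / (a * c) := by
    rw [key, hJ, hdim, measureReal_def, hvol, nsmul_eq_mul, Complex.real_smul]
    push_cast
    have h4 : (4:ℂ) * ↑π ≠ 0 := by simp [hπc]
    rw [show (3:ℂ) * (4 * ↑π / 3 * (1 / (4 * ↑π * a * c)))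
        = (4 * ↑π) * (1 / (4 * ↑π)) * (1 / (a * c)) by ring,
      mul_one_div_cancel h4, one_mul]
  have hFeq : (fun x : EuclideanSpace ℝ (Fin 3) =>
      -Complex.exp (a * (‖x‖:ℝ)) / (4 * (π:ℝ) * (‖x‖:ℝ) ^ 2 * c))
      = fun x : EuclideanSpace ℝ (Fin 3) => f ‖x‖ := by
    rw [hf_def]
  constructor
  · rw [hFeq]; exact hInt
  · rw [hFeq]; exact hint
end

section
/- Let f : (0,∞) → ℝ be continuous with f(v) = O(v^{1+δ}) as v → 0⁺ for some δ > 0, and suppose ∫₁^∞ |log(1 - e^{-v})|·|f(v)| dv < ∞ with f bounded on [1,∞). Then F(τ) = ∫₀^∞ log(1 - e^{-τv}) f(v) dv satisfies F(τ) → 0 as τ → ∞; more precisely F(τ) = O(τ^{-δ}) + O(e^{-τ}). -/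
open MeasureTheory Real Filter Set Topology Asymptotics

lemma relEta_pos {x : ℝ} (hx : 0 < x) : 0 < 1 - Real.exp (-x) := by
  have : Real.exp (-x) < 1 := by rw [Real.exp_lt_one_iff]; linarith
  linarith

lemma relEta_nonneg {x : ℝ} (hx : 0 < x) : 0 ≤ -Real.log (1 - Real.exp (-x)) := by
  have h := Real.log_nonpos (relEta_pos hx).le
    (by nlinarith [Real.exp_pos (-x)] : 1 - Real.exp (-x) ≤ 1)
  linarith

lemma relEta_small2 {δ x : ℝ} (hδ : 0 < δ) (hx : 0 < x) (hx1 : x ≤ 1) :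
    -Real.log (1 - Real.exp (-x)) ≤ (2 ^ (δ/2) / (δ/2)) * x ^ (-(δ/2)) := by
  have key : x / 2 ≤ 1 - Real.exp (-x) := by
    have h1 := Real.add_one_le_exp x
    have h2 : Real.exp (-x) * Real.exp x = 1 := by rw [← Real.exp_add]; simp
    nlinarith [Real.exp_pos (-x), Real.exp_pos x,
      mul_le_mul_of_nonneg_left h1 (Real.exp_pos (-x)).le,
      mul_nonneg hx.le (sub_nonneg.2 hx1)]
  have h3 := Real.log_le_log (by linarith : (0:ℝ) < x/2) key
  have h5 : Real.log (x/2) = Real.log x - Real.log 2 := Real.log_div hx.ne' (by norm_num)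
  have hlr : Real.log (2/x) ≤ (2/x) ^ (δ/2) / (δ/2) := by
    have h := Real.log_le_sub_one_of_pos (Real.rpow_pos_of_pos (div_pos two_pos hx) (δ/2))
    rw [Real.log_rpow (div_pos two_pos hx)] at h
    rw [le_div_iff₀ (half_pos hδ)]
    nlinarith [Real.rpow_pos_of_pos (div_pos two_pos hx) (δ/2)]
  have h6 : Real.log (2/x) = Real.log 2 - Real.log x := Real.log_div (by norm_num) hx.ne'
  have h4 : (2/x : ℝ) ^ (δ/2) = 2 ^ (δ/2) * x ^ (-(δ/2)) := by
    rw [Real.div_rpow (by norm_num) hx.le, Real.rpow_neg hx.le, div_eq_mul_inv]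
  calc -Real.log (1 - Real.exp (-x)) ≤ -(Real.log x - Real.log 2) := by rw [← h5]; linarith
    _ = Real.log (2/x) := by rw [h6]; ring
    _ ≤ (2/x) ^ (δ/2) / (δ/2) := hlr
    _ = (2 ^ (δ/2) / (δ/2)) * x ^ (-(δ/2)) := by rw [h4]; ring

lemma relEta_large {x : ℝ} (hx : 1 ≤ x) :
    -Real.log (1 - Real.exp (-x)) ≤ 2 * Real.exp (-x) := by
  set t := Real.exp (-x) with ht
  have ht0 : 0 < t := Real.exp_pos _
  have ht2 : t ≤ 1/2 := by
    have h1 : Real.exp (-x) ≤ Real.exp (-1) := Real.exp_le_exp.2 (by linarith)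
    have h2 : Real.exp (-1) * Real.exp 1 = 1 := by rw [← Real.exp_add]; simp
    have h3 : (2:ℝ) ≤ Real.exp 1 := by have := Real.add_one_le_exp 1; linarith
    nlinarith [Real.exp_pos (-1)]
  have hpos : 0 < 1 - t := by linarith
  have h := Real.log_le_sub_one_of_pos (inv_pos.2 hpos)
  rw [Real.log_inv] at h
  have h4 : (1 - t) * (1 - t)⁻¹ = 1 := mul_inv_cancel₀ hpos.ne'
  nlinarith [inv_pos.2 hpos]

lemma relEta_mono {x y : ℝ} (hx : 0 < x) (hxy : x ≤ y) :
    -Real.log (1 - Real.exp (-y)) ≤ -Real.log (1 - Real.exp (-x)) := by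
  have h1 : 0 < 1 - Real.exp (-x) := relEta_pos hx
  have h2 : Real.exp (-y) ≤ Real.exp (-x) := Real.exp_le_exp.2 (by linarith)
  have := Real.log_le_log h1 (by linarith : 1 - Real.exp (-x) ≤ 1 - Real.exp (-y))
  linarith

lemma relEta_contOn : ContinuousOn (fun u : ℝ => Real.log (1 - Real.exp (-u))) (Ioi 0) :=
  ContinuousOn.log (by fun_prop) (fun x hx => (relEta_pos hx).ne')

lemma relEta_g_int {δ : ℝ} (hδ : 0 < δ) :
    IntegrableOn (fun u : ℝ => -Real.log (1 - Real.exp (-u)) * u ^ (1+δ)) (Ioi 0) := by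
  have hcont : ContinuousOn (fun u : ℝ => -Real.log (1 - Real.exp (-u)) * u ^ (1+δ)) (Ioi 0) :=
    relEta_contOn.neg.mul (continuousOn_id.rpow_const fun x hx => Or.inl (ne_of_gt hx))
  rw [← Ioc_union_Ioi_eq_Ioi (zero_le_one : (0:ℝ) ≤ 1), integrableOn_union]
  constructor
  · have hint : IntegrableOn (fun u : ℝ => (2 ^ (δ/2) / (δ/2)) * u ^ (1+δ/2)) (Ioc 0 1) := by
      apply Integrable.const_mul
      have := @intervalIntegral.intervalIntegrable_rpow' 0 1 (1+δ/2) (by linarith)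
      rwa [intervalIntegrable_iff_integrableOn_Ioc_of_le zero_le_one] at this
    apply hint.mono' ((hcont.mono Ioc_subset_Ioi_self).aestronglyMeasurable measurableSet_Ioc)
    filter_upwards [ae_restrict_mem measurableSet_Ioc] with u hu
    have hu0 : 0 < u := hu.1
    rw [Real.norm_eq_abs, abs_mul, abs_of_nonneg (relEta_nonneg hu0),
      abs_of_nonneg (Real.rpow_nonneg hu0.le _)]
    calc -Real.log (1 - Real.exp (-u)) * u ^ (1+δ)
        ≤ ((2 ^ (δ/2) / (δ/2)) * u ^ (-(δ/2))) * u ^ (1+δ) :=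
          mul_le_mul_of_nonneg_right (relEta_small2 hδ hu0 hu.2) (Real.rpow_nonneg hu0.le _)
      _ = (2 ^ (δ/2) / (δ/2)) * u ^ (1+δ/2) := by
          rw [mul_assoc, ← Real.rpow_add hu0]
          congr 2
          ring
  · have hint : IntegrableOn (fun u : ℝ => 2 * (Real.exp (-u) * u ^ ((2+δ)-1))) (Ioi 1) :=
      ((Real.GammaIntegral_convergent (by linarith : (0:ℝ) < 2+δ)).mono_set
        (Ioi_subset_Ioi zero_le_one)).const_mul 2
    apply hint.mono' ((hcont.mono (Ioi_subset_Ioi zero_le_one)).aestronglyMeasurable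
      measurableSet_Ioi)
    filter_upwards [ae_restrict_mem measurableSet_Ioi] with u hu
    have hu1 : (1:ℝ) ≤ u := le_of_lt hu
    have hu0 : (0:ℝ) < u := lt_of_lt_of_le one_pos hu1
    rw [Real.norm_eq_abs, abs_mul, abs_of_nonneg (relEta_nonneg hu0),
      abs_of_nonneg (Real.rpow_nonneg hu0.le _)]
    calc -Real.log (1 - Real.exp (-u)) * u ^ (1+δ)
        ≤ (2 * Real.exp (-u)) * u ^ (1+δ) :=
          mul_le_mul_of_nonneg_right (relEta_large hu1) (Real.rpow_nonneg hu0.le _)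
      _ = 2 * (Real.exp (-u) * u ^ ((2+δ)-1)) := by rw [show (2+δ)-1 = 1+δ by ring]; ring

lemma relEta_subst {δ τ : ℝ} (hδ : 0 < δ) (hτ : 0 < τ) :
    IntegrableOn (fun v : ℝ => -Real.log (1 - Real.exp (-(τ*v))) * v ^ (1+δ)) (Ioi 0) ∧
    ∫ v in Ioi (0:ℝ), -Real.log (1 - Real.exp (-(τ*v))) * v ^ (1+δ)
      = τ ^ (-(2+δ)) * ∫ u in Ioi (0:ℝ), -Real.log (1 - Real.exp (-u)) * u ^ (1+δ) := by
  set g : ℝ → ℝ := fun u => -Real.log (1 - Real.exp (-u)) * u ^ (1+δ) with hg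
  have hτpow : (0:ℝ) < τ ^ (1+δ) := Real.rpow_pos_of_pos hτ _
  have heq : EqOn (fun v : ℝ => (τ ^ (1+δ))⁻¹ * g (τ * v))
      (fun v : ℝ => -Real.log (1 - Real.exp (-(τ*v))) * v ^ (1+δ)) (Ioi 0) := by
    intro v hv
    have hmul : (τ*v) ^ (1+δ) = τ^(1+δ) * v^(1+δ) := Real.mul_rpow hτ.le (le_of_lt hv)
    simp only [hg, hmul]
    field_simp
  have hgint : IntegrableOn g (Ioi 0) := relEta_g_int hδ
  have hcomp : IntegrableOn (fun v => g (τ * v)) (Ioi 0) := by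
    have := (integrableOn_Ioi_comp_mul_left_iff g 0 hτ).mpr (by simpa using hgint)
    simpa using this
  constructor
  · exact IntegrableOn.congr_fun (hcomp.const_mul _) heq measurableSet_Ioi
  · rw [← setIntegral_congr_fun measurableSet_Ioi heq, integral_const_mul,
      integral_comp_mul_left_Ioi g 0 hτ, mul_zero, smul_eq_mul, ← mul_assoc]
    congr 1
    rw [← Real.rpow_neg_one τ, ← Real.rpow_neg hτ.le, ← Real.rpow_add hτ]
    congr 1
    ring

/-- Low-temperature behavior of the relative Dedekind eta function.  If
`f : (0,∞) → ℝ` is continuous, `f(v) = O(v^{1+δ})` as `v → 0⁺` for some `δ > 0`,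
`∫₁^∞ |log(1-e^{-v})|·|f(v)| dv < ∞`, and `f` is bounded on `[1,∞)`, then
`F(τ) = ∫₀^∞ log(1-e^{-τv}) f(v) dv` tends to `0` as `τ → ∞`; more precisely
`F(τ) = O(τ^{-δ}) + O(e^{-τ})`. -/
theorem relative_eta_low_temperature (f : ℝ → ℝ) (δ : ℝ) (hδ : 0 < δ)
    (hcont : ContinuousOn f (Ioi 0))
    (h0 : (fun v => f v) =O[𝓝[>] (0:ℝ)] fun v => v ^ (1 + δ))
    (hint : IntegrableOn (fun v => Real.log (1 - Real.exp (-v)) * f v) (Ioi 1))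
    (hbdd : ∃ M : ℝ, ∀ v ≥ (1:ℝ), |f v| ≤ M) :
    Tendsto (fun τ => ∫ v in Ioi (0:ℝ), Real.log (1 - Real.exp (-τ * v)) * f v)
        atTop (𝓝 0) ∧
    ∃ C : ℝ, ∀ τ ≥ (1:ℝ),
        |∫ v in Ioi (0:ℝ), Real.log (1 - Real.exp (-τ * v)) * f v| ≤
          C * (τ ^ (-δ) + Real.exp (-τ)) := by
  set c2 : ℝ := 2 ^ (δ/2) / (δ/2) with hc2def
  have hc2 : 0 ≤ c2 := div_nonneg (Real.rpow_nonneg (by norm_num) _) (by linarith)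
  -- extract the constant `K` with `|f v| ≤ K v^(1+δ)` on `(0,1]`
  obtain ⟨c, hc⟩ := h0.bound
  rw [eventually_nhdsWithin_iff] at hc
  obtain ⟨ε, hε, hcε⟩ := Metric.eventually_nhds_iff.mp hc
  set ε' : ℝ := min (ε/2) 1 with hε'def
  have hε'pos : 0 < ε' := lt_min (by linarith) one_pos
  obtain ⟨Cb, hCb⟩ := (isCompact_Icc (a := ε') (b := 1)).exists_bound_of_continuousOn
    (hcont.mono (fun x hx => lt_of_lt_of_le hε'pos hx.1))
  set K : ℝ := max c (max Cb 0 / ε' ^ (1+δ)) with hKdef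
  have hK0 : 0 ≤ K :=
    le_trans (div_nonneg (le_max_right _ _) (Real.rpow_pos_of_pos hε'pos _).le)
      (le_max_right _ _)
  have hK : ∀ v ∈ Ioc (0:ℝ) 1, |f v| ≤ K * v ^ (1+δ) := by
    intro v hv
    have hv0 : 0 < v := hv.1
    have hvp : (0:ℝ) ≤ v ^ (1+δ) := Real.rpow_nonneg hv0.le _
    by_cases h : v ≤ ε'
    · have hd : dist v 0 < ε := by
        rw [Real.dist_eq, sub_zero, abs_of_pos hv0]
        have : ε' ≤ ε/2 := min_le_left _ _
        linarith
      have h1 := hcε hd hv0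
      rw [Real.norm_eq_abs, Real.norm_eq_abs, abs_of_nonneg hvp] at h1
      calc |f v| ≤ c * v ^ (1+δ) := h1
        _ ≤ K * v ^ (1+δ) := mul_le_mul_of_nonneg_right (le_max_left _ _) hvp
    · push_neg at h
      have h1 := hCb v ⟨h.le, hv.2⟩
      rw [Real.norm_eq_abs] at h1
      have h2 : ε' ^ (1+δ) ≤ v ^ (1+δ) := Real.rpow_le_rpow hε'pos.le h.le (by linarith)
      have h3 : (0:ℝ) < ε' ^ (1+δ) := Real.rpow_pos_of_pos hε'pos _
      have h4 : max Cb 0 / ε' ^ (1+δ) ≤ K := le_max_right _ _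
      calc |f v| ≤ max Cb 0 := le_trans h1 (le_max_left _ _)
        _ = (max Cb 0 / ε' ^ (1+δ)) * ε' ^ (1+δ) := by field_simp
        _ ≤ (max Cb 0 / ε' ^ (1+δ)) * v ^ (1+δ) :=
            mul_le_mul_of_nonneg_left h2 (div_nonneg (le_max_right _ _) h3.le)
        _ ≤ K * v ^ (1+δ) := mul_le_mul_of_nonneg_right h4 hvp
  -- the bound `M` on `[1,∞)`
  obtain ⟨M₀, hM₀⟩ := hbdd
  set M : ℝ := max M₀ 0 with hMdef
  have hM0 : 0 ≤ M := le_max_right _ _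
  have hM : ∀ v, 1 ≤ v → |f v| ≤ M := fun v hv => le_trans (hM₀ v hv) (le_max_left _ _)
  -- the master integral `I`
  set I : ℝ := ∫ u in Ioi (0:ℝ), -Real.log (1 - Real.exp (-u)) * u ^ (1+δ) with hIdef
  have hI0 : 0 ≤ I := setIntegral_nonneg measurableSet_Ioi
    (fun u hu => mul_nonneg (relEta_nonneg hu) (Real.rpow_nonneg (le_of_lt hu) _))
  -- the key quantitative bound
  have key : ∀ τ : ℝ, 1 ≤ τ →
      |∫ v in Ioi (0:ℝ), Real.log (1 - Real.exp (-τ * v)) * f v|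
        ≤ K * I * τ ^ (-δ) + 2 * M * Real.exp (-τ) := by
    intro τ hτ
    have hτ0 : (0:ℝ) < τ := lt_of_lt_of_le one_pos hτ
    have hfun : (fun v : ℝ => Real.log (1 - Real.exp (-τ * v)) * f v)
        = fun v => Real.log (1 - Real.exp (-(τ * v))) * f v := by
      funext v; rw [neg_mul]
    rw [hfun]
    have hΦcont : ContinuousOn (fun v : ℝ => Real.log (1 - Real.exp (-(τ * v))) * f v)
        (Ioi 0) := by
      apply ContinuousOn.mul ?_ hcont
      exact ContinuousOn.log (by fun_prop) (fun v hv => (relEta_pos (mul_pos hτ0 hv)).ne')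
    have hmeas1 : AEStronglyMeasurable (fun v : ℝ => Real.log (1 - Real.exp (-(τ * v))) * f v)
        (volume.restrict (Ioc 0 1)) :=
      (hΦcont.mono Ioc_subset_Ioi_self).aestronglyMeasurable measurableSet_Ioc
    have hmeas2 : AEStronglyMeasurable (fun v : ℝ => Real.log (1 - Real.exp (-(τ * v))) * f v)
        (volume.restrict (Ioi 1)) :=
      (hΦcont.mono (Ioi_subset_Ioi zero_le_one)).aestronglyMeasurable measurableSet_Ioi
    -- bound on (0,1]
    have hbound1 : ∀ v ∈ Ioc (0:ℝ) 1,
        |Real.log (1 - Real.exp (-(τ * v))) * f v| ≤ (K * c2) * v ^ (1 + δ/2) := by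
      intro v hv
      have hv0 : 0 < v := hv.1
      have hτv : 0 < τ * v := mul_pos hτ0 hv0
      have hlog : |Real.log (1 - Real.exp (-(τ * v)))| ≤ c2 * v ^ (-(δ/2)) := by
        rw [abs_of_nonpos (by linarith [relEta_nonneg hτv])]
        calc -Real.log (1 - Real.exp (-(τ*v)))
            ≤ -Real.log (1 - Real.exp (-v)) :=
              relEta_mono hv0 (le_mul_of_one_le_left hv0.le hτ)
          _ ≤ c2 * v ^ (-(δ/2)) := relEta_small2 hδ hv0 hv.2
      have hrp : v ^ (-(δ/2)) * v ^ (1+δ) = v ^ (1+δ/2) := by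
        rw [← Real.rpow_add hv0]; congr 1; ring
      calc |Real.log (1 - Real.exp (-(τ * v))) * f v|
          = |Real.log (1 - Real.exp (-(τ*v)))| * |f v| := abs_mul _ _
        _ ≤ (c2 * v ^ (-(δ/2))) * (K * v ^ (1+δ)) :=
            mul_le_mul hlog (hK v hv) (abs_nonneg _)
              (mul_nonneg hc2 (Real.rpow_nonneg hv0.le _))
        _ = (K * c2) * (v ^ (-(δ/2)) * v ^ (1+δ)) := by ring
        _ = (K * c2) * v ^ (1 + δ/2) := by rw [hrp]
    have hD1 : IntegrableOn (fun v : ℝ => (K * c2) * v ^ (1+δ/2)) (Ioc 0 1) := by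
      apply Integrable.const_mul
      have := @intervalIntegral.intervalIntegrable_rpow' 0 1 (1+δ/2) (by linarith)
      rwa [intervalIntegrable_iff_integrableOn_Ioc_of_le zero_le_one] at this
    have hInt1 : IntegrableOn (fun v : ℝ => Real.log (1 - Real.exp (-(τ * v))) * f v)
        (Ioc 0 1) := by
      apply hD1.mono' hmeas1
      filter_upwards [ae_restrict_mem measurableSet_Ioc] with v hv
      rw [Real.norm_eq_abs]
      exact hbound1 v hv
    -- bound on (1,∞)
    have hbound2 : ∀ v ∈ Ioi (1:ℝ),
        |Real.log (1 - Real.exp (-(τ * v))) * f v|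
          ≤ (2*M*Real.exp (-τ) * Real.exp 1) * Real.exp (-v) := by
      intro v hv
      have hv1 : (1:ℝ) ≤ v := le_of_lt hv
      have hv0 : (0:ℝ) < v := lt_of_lt_of_le one_pos hv1
      have hτv : (0:ℝ) < τ * v := mul_pos hτ0 hv0
      have hτv1 : (1:ℝ) ≤ τ * v := by nlinarith
      have hlog : |Real.log (1 - Real.exp (-(τ * v)))|
          ≤ 2 * (Real.exp (-τ) * Real.exp 1 * Real.exp (-v)) := by
        rw [abs_of_nonpos (by linarith [relEta_nonneg hτv])]
        calc -Real.log (1 - Real.exp (-(τ*v))) ≤ 2 * Real.exp (-(τ*v)) := relEta_large hτv1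
          _ ≤ 2 * (Real.exp (-τ) * Real.exp 1 * Real.exp (-v)) := by
              have h1 : -(τ*v) ≤ -τ + 1 + -v := by
                nlinarith [mul_nonneg (sub_nonneg.2 hτ) (sub_nonneg.2 hv1)]
              have h2 := Real.exp_le_exp.2 h1
              rw [Real.exp_add, Real.exp_add] at h2
              linarith
      calc |Real.log (1 - Real.exp (-(τ * v))) * f v|
          = |Real.log (1 - Real.exp (-(τ*v)))| * |f v| := abs_mul _ _
        _ ≤ (2 * (Real.exp (-τ) * Real.exp 1 * Real.exp (-v))) * M :=
            mul_le_mul hlog (hM v hv1) (abs_nonneg _) (by positivity)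
        _ = (2*M*Real.exp (-τ) * Real.exp 1) * Real.exp (-v) := by ring
    have hB : IntegrableOn (fun v : ℝ => (2*M*Real.exp (-τ) * Real.exp 1) * Real.exp (-v))
        (Ioi 1) := by
      apply Integrable.const_mul
      have := exp_neg_integrableOn_Ioi 1 (show (0:ℝ) < 1 by norm_num)
      simp at this; exact this
    have hInt2 : IntegrableOn (fun v : ℝ => Real.log (1 - Real.exp (-(τ * v))) * f v)
        (Ioi 1) := by
      apply hB.mono' hmeas2
      filter_upwards [ae_restrict_mem measurableSet_Ioi] with v hv
      rw [Real.norm_eq_abs]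
      exact hbound2 v hv
    -- split the integral
    have hsplit : (∫ v in Ioi (0:ℝ), Real.log (1 - Real.exp (-(τ * v))) * f v)
        = (∫ v in Ioc (0:ℝ) 1, Real.log (1 - Real.exp (-(τ * v))) * f v)
          + ∫ v in Ioi (1:ℝ), Real.log (1 - Real.exp (-(τ * v))) * f v := by
      rw [← setIntegral_union (Set.Ioc_disjoint_Ioi le_rfl) measurableSet_Ioi hInt1 hInt2,
        Ioc_union_Ioi_eq_Ioi zero_le_one]
    obtain ⟨hψint, hψval⟩ := relEta_subst (δ := δ) hδ hτ0
    have hKψint : IntegrableOn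
        (fun v : ℝ => K * (-Real.log (1 - Real.exp (-(τ*v))) * v ^ (1+δ))) (Ioi 0) :=
      hψint.const_mul K
    -- estimate on (0,1]
    have e1 : |∫ v in Ioc (0:ℝ) 1, Real.log (1 - Real.exp (-(τ * v))) * f v|
        ≤ K * I * τ ^ (-δ) := by
      have h1 : |∫ v in Ioc (0:ℝ) 1, Real.log (1 - Real.exp (-(τ * v))) * f v|
          ≤ ∫ v in Ioc (0:ℝ) 1, |Real.log (1 - Real.exp (-(τ * v))) * f v| := by
        simpa only [Real.norm_eq_abs] using norm_integral_le_integral_norm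
          (μ := volume.restrict (Ioc 0 1))
          (fun v : ℝ => Real.log (1 - Real.exp (-(τ * v))) * f v)
      have h2 : (∫ v in Ioc (0:ℝ) 1, |Real.log (1 - Real.exp (-(τ * v))) * f v|)
          ≤ ∫ v in Ioc (0:ℝ) 1, K * (-Real.log (1 - Real.exp (-(τ*v))) * v ^ (1+δ)) := by
        apply setIntegral_mono_on hInt1.abs (hKψint.mono_set Ioc_subset_Ioi_self)
          measurableSet_Ioc
        intro v hv
        have hv0 : 0 < v := hv.1
        have hτv : 0 < τ * v := mul_pos hτ0 hv0
        rw [abs_mul, abs_of_nonpos (by linarith [relEta_nonneg hτv])]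
        calc (-Real.log (1 - Real.exp (-(τ*v)))) * |f v|
            ≤ (-Real.log (1 - Real.exp (-(τ*v)))) * (K * v ^ (1+δ)) :=
              mul_le_mul_of_nonneg_left (hK v hv) (relEta_nonneg hτv)
          _ = K * (-Real.log (1 - Real.exp (-(τ*v))) * v ^ (1+δ)) := by ring
      have h3 : (∫ v in Ioc (0:ℝ) 1, K * (-Real.log (1 - Real.exp (-(τ*v))) * v ^ (1+δ)))
          ≤ ∫ v in Ioi (0:ℝ), K * (-Real.log (1 - Real.exp (-(τ*v))) * v ^ (1+δ)) := by
        apply setIntegral_mono_set hKψint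
        · filter_upwards [ae_restrict_mem measurableSet_Ioi] with v hv
          exact mul_nonneg hK0 (mul_nonneg (relEta_nonneg (mul_pos hτ0 hv))
            (Real.rpow_nonneg (le_of_lt hv) _))
        · exact HasSubset.Subset.eventuallyLE Ioc_subset_Ioi_self
      have h4 : (∫ v in Ioi (0:ℝ), K * (-Real.log (1 - Real.exp (-(τ*v))) * v ^ (1+δ)))
          = K * (τ ^ (-(2+δ)) * I) := by
        rw [integral_const_mul, hψval]
      have h5 : τ ^ (-(2+δ)) ≤ τ ^ (-δ) :=
        Real.rpow_le_rpow_of_exponent_le hτ (by linarith)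
      have h6 : K * (τ ^ (-(2+δ)) * I) ≤ K * I * τ ^ (-δ) := by
        have := mul_le_mul_of_nonneg_left h5 (mul_nonneg hK0 hI0)
        nlinarith [this]
      linarith [h1, h2, h3, h4.le, h4.ge]
    -- estimate on (1,∞)
    have e2 : |∫ v in Ioi (1:ℝ), Real.log (1 - Real.exp (-(τ * v))) * f v|
        ≤ 2 * M * Real.exp (-τ) := by
      have h1 : |∫ v in Ioi (1:ℝ), Real.log (1 - Real.exp (-(τ * v))) * f v|
          ≤ ∫ v in Ioi (1:ℝ), |Real.log (1 - Real.exp (-(τ * v))) * f v| := by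
        simpa only [Real.norm_eq_abs] using norm_integral_le_integral_norm
          (μ := volume.restrict (Ioi 1))
          (fun v : ℝ => Real.log (1 - Real.exp (-(τ * v))) * f v)
      have h2 : (∫ v in Ioi (1:ℝ), |Real.log (1 - Real.exp (-(τ * v))) * f v|)
          ≤ ∫ v in Ioi (1:ℝ), (2*M*Real.exp (-τ) * Real.exp 1) * Real.exp (-v) :=
        setIntegral_mono_on hInt2.abs hB measurableSet_Ioi hbound2
      have h3 : (∫ v in Ioi (1:ℝ), (2*M*Real.exp (-τ) * Real.exp 1) * Real.exp (-v))
          = 2 * M * Real.exp (-τ) := by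
        have hee : Real.exp 1 * Real.exp (-1) = 1 := by rw [← Real.exp_add]; norm_num
        rw [integral_const_mul, integral_exp_neg_Ioi]
        calc (2*M*Real.exp (-τ) * Real.exp 1) * Real.exp (-1)
            = 2*M*Real.exp (-τ) * (Real.exp 1 * Real.exp (-1)) := by ring
          _ = 2*M*Real.exp (-τ) := by rw [hee, mul_one]
      linarith
    calc |∫ v in Ioi (0:ℝ), Real.log (1 - Real.exp (-(τ * v))) * f v|
        ≤ |∫ v in Ioc (0:ℝ) 1, Real.log (1 - Real.exp (-(τ * v))) * f v|
          + |∫ v in Ioi (1:ℝ), Real.log (1 - Real.exp (-(τ * v))) * f v| := by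
          rw [hsplit]; exact abs_add_le _ _
      _ ≤ K * I * τ ^ (-δ) + 2 * M * Real.exp (-τ) := add_le_add e1 e2
  -- assemble
  set C : ℝ := max (K * I) (2 * M) with hCdef
  have hC2 : ∀ τ : ℝ, 1 ≤ τ →
      |∫ v in Ioi (0:ℝ), Real.log (1 - Real.exp (-τ * v)) * f v|
        ≤ C * (τ ^ (-δ) + Real.exp (-τ)) := by
    intro τ hτ
    have hτ0 : (0:ℝ) < τ := lt_of_lt_of_le one_pos hτ
    have ha : 0 ≤ τ ^ (-δ) := Real.rpow_nonneg hτ0.le _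
    have hb : (0:ℝ) ≤ Real.exp (-τ) := (Real.exp_pos _).le
    have h1 := key τ hτ
    have h2 : K * I * τ ^ (-δ) ≤ C * τ ^ (-δ) :=
      mul_le_mul_of_nonneg_right (le_max_left _ _) ha
    have h3 : 2 * M * Real.exp (-τ) ≤ C * Real.exp (-τ) :=
      mul_le_mul_of_nonneg_right (le_max_right _ _) hb
    calc |∫ v in Ioi (0:ℝ), Real.log (1 - Real.exp (-τ * v)) * f v|
        ≤ K * I * τ ^ (-δ) + 2 * M * Real.exp (-τ) := h1
      _ ≤ C * τ ^ (-δ) + C * Real.exp (-τ) := add_le_add h2 h3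
      _ = C * (τ ^ (-δ) + Real.exp (-τ)) := by ring
  refine ⟨?_, C, fun τ hτ => hC2 τ hτ⟩
  apply squeeze_zero_norm' (a := fun τ : ℝ => C * (τ ^ (-δ) + Real.exp (-τ)))
  · filter_upwards [eventually_ge_atTop (1:ℝ)] with τ hτ
    rw [Real.norm_eq_abs]
    exact hC2 τ hτ
  · have h1 : Tendsto (fun τ : ℝ => τ ^ (-δ)) atTop (𝓝 0) := tendsto_rpow_neg_atTop hδ
    have h2 : Tendsto (fun τ : ℝ => Real.exp (-τ)) atTop (𝓝 0) :=
      Real.tendsto_exp_neg_atTop_nhds_zero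
    have := (h1.add h2).const_mul C
    simpa using this
end

section
/- As v → ∞, e(v; -Δ_{α,a}, -Δ) = (-2cos(2av) + 4π(α₀+α₁)a)/(πav²) + O(v^{-3}). -/
open MeasureTheory Real Filter Set Asymptotics

/-- The trace of the relative spectral measure `e(v; -Δ_{α,a}, -Δ)` for two delta
interactions in ℝ³. -/
noncomputable def relSpecMeasureTwoDelta (α₀ α₁ a : ℝ) (v : ℝ) : ℂ :=
  ((a : ℂ) / π) *
    ((2 * π * (α₀ + α₁) * a - Complex.I * a * v + Complex.exp (2 * Complex.I * a * v)) /
        ((a : ℂ) ^ 2 * (4 * π * α₀ - Complex.I * v) * (4 * π * α₁ - Complex.I * v) -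
          Complex.exp (2 * Complex.I * a * v)) +
     (2 * π * (α₀ + α₁) * a + Complex.I * a * v + Complex.exp (-(2 * Complex.I * a * v))) /
        ((a : ℂ) ^ 2 * (4 * π * α₀ + Complex.I * v) * (4 * π * α₁ + Complex.I * v) -
          Complex.exp (-(2 * Complex.I * a * v))))

open Complex in
set_option maxHeartbeats 3000000 in
lemma algDelta (p A V U W x : ℂ) (hp : p ≠ 0) (hA : A ≠ 0) (hV : V ≠ 0) (hx : x ≠ 0)
    (hD1 : A^2*(U - I*V)*(W - I*V) - x ≠ 0)
    (hD2 : A^2*(U + I*V)*(W + I*V) - x⁻¹ ≠ 0) :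
    A/p * ((U*A/2 + W*A/2 - I*A*V + x)/(A^2*(U - I*V)*(W - I*V) - x)
         + (U*A/2 + W*A/2 + I*A*V + x⁻¹)/(A^2*(U + I*V)*(W + I*V) - x⁻¹))
      - (-2*((x+x⁻¹)/2) + (U+W)*A)/(p*A*V^2)
    = (V^3 * (I*(A^3 - A^4*(U+W)) * (x⁻¹ - x))
      + V^2 * (-(A^5)*(U^3+W^3) + (-(3/2 : ℂ)*A^3*(U+W) + A^4*(U^2+U*W+W^2))*(x+x⁻¹)
          + A^2*(x^2+(x⁻¹)^2))
      + V * (I*A^3*(U+W)^2*(x-x⁻¹) + I*A^2*(U+W)*((x⁻¹)^2 - x^2))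
      + (-(A*(U+W)) - 2*A^2*U*W - A^5*U^2*W^2*(U+W)
          + (1 + A^3*U*W*(U+W) + A^4*U^2*W^2)*(x+x⁻¹)
          + (-(A^2)*U*W)*(x^2+(x⁻¹)^2)))
      / (p*A*V^2*(A^2*(U - I*V)*(W - I*V) - x)*(A^2*(U + I*V)*(W + I*V) - x⁻¹)) := by
  have hE2 : A^2*(U + I*V)*(W + I*V)*x - 1 ≠ 0 := by
    have h : (A^2*(U + I*V)*(W + I*V) - x⁻¹) * x = A^2*(U + I*V)*(W + I*V)*x - 1 := by
      field_simp
    rw [← h]; exact mul_ne_zero hD2 hx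
  have hpav : p*A*V^2 ≠ 0 := mul_ne_zero (mul_ne_zero hp hA) (pow_ne_zero 2 hV)
  have hpavx : p*A*V^2*x ≠ 0 := mul_ne_zero hpav hx
  have e2 : (U*A/2 + W*A/2 + I*A*V + x⁻¹)/(A^2*(U + I*V)*(W + I*V) - x⁻¹)
      = ((U*A/2 + W*A/2 + I*A*V)*x + 1)/(A^2*(U + I*V)*(W + I*V)*x - 1) := by
    rw [div_eq_div_iff hD2 hE2]
    field_simp
  have eT : (-2*((x+x⁻¹)/2) + (U+W)*A)/(p*A*V^2)
      = (-(x^2+1) + (U+W)*A*x)/(p*A*V^2*x) := by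
    rw [div_eq_div_iff hpav hpavx]
    field_simp
  have hden : p*A*V^2*(A^2*(U - I*V)*(W - I*V) - x)*(A^2*(U + I*V)*(W + I*V) - x⁻¹) ≠ 0 :=
    mul_ne_zero (mul_ne_zero hpav hD1) hD2
  have hden' : p*A*V^2*(A^2*(U - I*V)*(W - I*V) - x)*(A^2*(U + I*V)*(W + I*V)*x - 1)*x ≠ 0 :=
    mul_ne_zero (mul_ne_zero (mul_ne_zero hpav hD1) hE2) hx
  have eR : (V^3 * (I*(A^3 - A^4*(U+W)) * (x⁻¹ - x))
      + V^2 * (-(A^5)*(U^3+W^3) + (-(3/2 : ℂ)*A^3*(U+W) + A^4*(U^2+U*W+W^2))*(x+x⁻¹)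
          + A^2*(x^2+(x⁻¹)^2))
      + V * (I*A^3*(U+W)^2*(x-x⁻¹) + I*A^2*(U+W)*((x⁻¹)^2 - x^2))
      + (-(A*(U+W)) - 2*A^2*U*W - A^5*U^2*W^2*(U+W)
          + (1 + A^3*U*W*(U+W) + A^4*U^2*W^2)*(x+x⁻¹)
          + (-(A^2)*U*W)*(x^2+(x⁻¹)^2)))
      / (p*A*V^2*(A^2*(U - I*V)*(W - I*V) - x)*(A^2*(U + I*V)*(W + I*V) - x⁻¹))
      = (V^3 * (I*(A^3 - A^4*(U+W)) * (x - x^3))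
      + V^2 * (-(A^5)*(U^3+W^3)*x^2 + (-(3/2 : ℂ)*A^3*(U+W) + A^4*(U^2+U*W+W^2))*(x^3+x)
          + A^2*(x^4+1))
      + V * (I*A^3*(U+W)^2*(x^3-x) + I*A^2*(U+W)*(1 - x^4))
      + ((-(A*(U+W)) - 2*A^2*U*W - A^5*U^2*W^2*(U+W))*x^2
          + (1 + A^3*U*W*(U+W) + A^4*U^2*W^2)*(x^3+x)
          + (-(A^2)*U*W)*(x^4+1)))
      / (p*A*V^2*(A^2*(U - I*V)*(W - I*V) - x)*(A^2*(U + I*V)*(W + I*V)*x - 1)*x) := by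
    have hNum : (V^3 * (I*(A^3 - A^4*(U+W)) * (x⁻¹ - x))
      + V^2 * (-(A^5)*(U^3+W^3) + (-(3/2 : ℂ)*A^3*(U+W) + A^4*(U^2+U*W+W^2))*(x+x⁻¹)
          + A^2*(x^2+(x⁻¹)^2))
      + V * (I*A^3*(U+W)^2*(x-x⁻¹) + I*A^2*(U+W)*((x⁻¹)^2 - x^2))
      + (-(A*(U+W)) - 2*A^2*U*W - A^5*U^2*W^2*(U+W)
          + (1 + A^3*U*W*(U+W) + A^4*U^2*W^2)*(x+x⁻¹)
          + (-(A^2)*U*W)*(x^2+(x⁻¹)^2))) * x^2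
      = (V^3 * (I*(A^3 - A^4*(U+W)) * (x - x^3))
      + V^2 * (-(A^5)*(U^3+W^3)*x^2 + (-(3/2 : ℂ)*A^3*(U+W) + A^4*(U^2+U*W+W^2))*(x^3+x)
          + A^2*(x^4+1))
      + V * (I*A^3*(U+W)^2*(x^3-x) + I*A^2*(U+W)*(1 - x^4))
      + ((-(A*(U+W)) - 2*A^2*U*W - A^5*U^2*W^2*(U+W))*x^2
          + (1 + A^3*U*W*(U+W) + A^4*U^2*W^2)*(x^3+x)
          + (-(A^2)*U*W)*(x^4+1))) := by
      linear_combination ((-1:ℂ)*A^4*V^3*U*x*Complex.I + (-1:ℂ)*A^4*V^3*W*x*Complex.I + A^4*V^2*U^2*x + A^4*V^2*U*W*x + A^4*V^2*W^2*x + A^4*U^2*W^2*x + A^3*V^3*x*Complex.I + (-3/2:ℂ)*A^3*V^2*U*x + (-3/2:ℂ)*A^3*V^2*W*x + (-1:ℂ)*A^3*V*U^2*x*Complex.I + (-2:ℂ)*A^3*V*U*W*x*Complex.I + (-1:ℂ)*A^3*V*W^2*x*Complex.I + A^3*U^2*W*x + A^3*U*W^2*x + A^2*V^2*x*x⁻¹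 + A^2*V^2 + A^2*V*U*x*x⁻¹*Complex.I + A^2*V*U*Complex.I + A^2*V*W*x*x⁻¹*Complex.I + A^2*V*W*Complex.I + (-1:ℂ)*A^2*U*W*x*x⁻¹ + (-1:ℂ)*A^2*U*W + x) * (mul_inv_cancel₀ hx)
    have hDen : (p*A*V^2*(A^2*(U - I*V)*(W - I*V) - x)*(A^2*(U + I*V)*(W + I*V) - x⁻¹)) * x^2
        = p*A*V^2*(A^2*(U - I*V)*(W - I*V) - x)*(A^2*(U + I*V)*(W + I*V)*x - 1)*x := by
      linear_combination ((-1:ℂ)*p*A^3*V^4*x*Complex.I^2 + p*A^3*V^3*U*x*Complex.I + p*A^3*V^3*W*x*Complex.I + (-1:ℂ)*p*A^3*V^2*U*W*x + p*A*V^2*x^2) * (mul_inv_cancel₀ hx)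
    rw [div_eq_div_iff hden hden', ← hDen, ← hNum]
    ring
  rw [e2, eT, eR, div_add_div _ _ hD1 hE2, div_mul_div_comm,
    div_sub_div _ _ (mul_ne_zero hp (mul_ne_zero hD1 hE2)) hpavx,
    div_eq_div_iff (mul_ne_zero (mul_ne_zero hp (mul_ne_zero hD1 hE2)) hpavx) hden']
  linear_combination ((-1:ℂ)*p^2*A^10*V^10*U*x^4*Complex.I^6 + (-1:ℂ)*p^2*A^10*V^10*W*x^4*Complex.I^6 + (2:ℂ)*p^2*A^10*V^8*U^3*x^4*Complex.I^4 + (2:ℂ)*p^2*A^10*V^8*U^2*W*x^4*Complex.I^4 + (2:ℂ)*p^2*A^10*V^8*U*W^2*x^4*Complex.I^4 + (2:ℂ)*p^2*A^10*V^8*W^3*x^4*Complex.I^4 + (-1:ℂ)*p^2*A^10*V^6*U^5*x^4*Complex.I^2 + (-1:ℂ)*p^2*A^10*V^6*U^4*W*x^4*Complex.I^2 + (-3:ℂ)*p^2*A^10*V^6*U^3*W^2*x^4*Complex.I^2 + (-3:ℂ)*p^2*A^10*V^6*U^2*W^3*x^4*Complex.I^2 + (-1:ℂ)*p^2*A^10*V^6*U*W^4*x^4*Complex.I^2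 + (-1:ℂ)*p^2*A^10*V^6*W^5*x^4*Complex.I^2 + p^2*A^10*V^4*U^5*W^2*x^4 + p^2*A^10*V^4*U^4*W^3*x^4 + p^2*A^10*V^4*U^3*W^4*x^4 + p^2*A^10*V^4*U^2*W^5*x^4 + p^2*A^9*V^10*x^5*Complex.I^6 + p^2*A^9*V^10*x^3*Complex.I^6 + (-2:ℂ)*p^2*A^9*V^8*U^2*x^5*Complex.I^4 + (-2:ℂ)*p^2*A^9*V^8*U^2*x^3*Complex.I^4 + (-2:ℂ)*p^2*A^9*V^8*W^2*x^5*Complex.I^4 + (-2:ℂ)*p^2*A^9*V^8*W^2*x^3*Complex.I^4 + p^2*A^9*V^6*U^4*x^5*Complex.I^2 + p^2*A^9*V^6*U^4*x^3*Complex.I^2 + (3:ℂ)*p^2*A^9*V^6*U^2*W^2*x^5*Complex.I^2 + (3:ℂ)*p^2*A^9*V^6*U^2*W^2*x^3*Complex.I^2 + p^2*A^9*V^6*W^4*x^5*Complex.I^2 + p^2*A^9*V^6*W^4*x^3*Complex.I^2 + (-1:ℂ)*p^2*A^9*V^4*U^4*W^2*x^5 + (-1:ℂ)*p^2*A^9*V^4*U^4*W^2*x^3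 + (-1:ℂ)*p^2*A^9*V^4*U^2*W^4*x^5 + (-1:ℂ)*p^2*A^9*V^4*U^2*W^4*x^3 + (2:ℂ)*p^2*A^8*V^8*U*x^5*Complex.I^4 + (2:ℂ)*p^2*A^8*V^8*U*x^3*Complex.I^4 + (2:ℂ)*p^2*A^8*V^8*W*x^5*Complex.I^4 + (2:ℂ)*p^2*A^8*V^8*W*x^3*Complex.I^4 + p^2*A^8*V^7*U^2*x^5*Complex.I^3 + (-1:ℂ)*p^2*A^8*V^7*U^2*x^3*Complex.I^3 + (2:ℂ)*p^2*A^8*V^7*U*W*x^5*Complex.I^3 + (-2:ℂ)*p^2*A^8*V^7*U*W*x^3*Complex.I^3 + p^2*A^8*V^7*W^2*x^5*Complex.I^3 + (-1:ℂ)*p^2*A^8*V^7*W^2*x^3*Complex.I^3 + (-2:ℂ)*p^2*A^8*V^6*U^3*x^5*Complex.I^2 + (-2:ℂ)*p^2*A^8*V^6*U^3*x^3*Complex.I^2 + (-1:ℂ)*p^2*A^8*V^6*U^2*W*x^5*Complex.I^2 + (-1:ℂ)*p^2*A^8*V^6*U^2*W*x^3*Complex.I^2 + (-1:ℂ)*p^2*A^8*V^6*U*W^2*x^5*Complex.I^2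 + (-1:ℂ)*p^2*A^8*V^6*U*W^2*x^3*Complex.I^2 + (-2:ℂ)*p^2*A^8*V^6*W^3*x^5*Complex.I^2 + (-2:ℂ)*p^2*A^8*V^6*W^3*x^3*Complex.I^2 + (-1:ℂ)*p^2*A^8*V^5*U^4*x^5*Complex.I + p^2*A^8*V^5*U^4*x^3*Complex.I + (-2:ℂ)*p^2*A^8*V^5*U^3*W*x^5*Complex.I + (2:ℂ)*p^2*A^8*V^5*U^3*W*x^3*Complex.I + (-2:ℂ)*p^2*A^8*V^5*U^2*W^2*x^5*Complex.I + (2:ℂ)*p^2*A^8*V^5*U^2*W^2*x^3*Complex.I + (-2:ℂ)*p^2*A^8*V^5*U*W^3*x^5*Complex.I + (2:ℂ)*p^2*A^8*V^5*U*W^3*x^3*Complex.I + (-1:ℂ)*p^2*A^8*V^5*W^4*x^5*Complex.I + p^2*A^8*V^5*W^4*x^3*Complex.I + (-1:ℂ)*p^2*A^8*V^4*U^4*W*x^5 + (-1:ℂ)*p^2*A^8*V^4*U^4*W*x^3 + (-1:ℂ)*p^2*A^8*V^4*U*W^4*x^5 + (-1:ℂ)*p^2*A^8*V^4*U*W^4*x^3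 + (-2:ℂ)*p^2*A^7*V^8*x^6*Complex.I^4 + (-4:ℂ)*p^2*A^7*V^8*x^4*Complex.I^4 + (-2:ℂ)*p^2*A^7*V^8*x^2*Complex.I^4 + (-1:ℂ)*p^2*A^7*V^7*U*x^6*Complex.I^3 + p^2*A^7*V^7*U*x^2*Complex.I^3 + (-1:ℂ)*p^2*A^7*V^7*W*x^6*Complex.I^3 + p^2*A^7*V^7*W*x^2*Complex.I^3 + (2:ℂ)*p^2*A^7*V^6*U^2*x^6*Complex.I^2 + (4:ℂ)*p^2*A^7*V^6*U^2*x^4*Complex.I^2 + (2:ℂ)*p^2*A^7*V^6*U^2*x^2*Complex.I^2 + (-1:ℂ)*p^2*A^7*V^6*U*W*x^6*Complex.I^2 + (-2:ℂ)*p^2*A^7*V^6*U*W*x^4*Complex.I^2 + (-1:ℂ)*p^2*A^7*V^6*U*W*x^2*Complex.I^2 + (2:ℂ)*p^2*A^7*V^6*W^2*x^6*Complex.I^2 + (4:ℂ)*p^2*A^7*V^6*W^2*x^4*Complex.I^2 + (2:ℂ)*p^2*A^7*V^6*W^2*x^2*Complex.I^2 + p^2*A^7*V^5*U^3*x^6*Complex.I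 + (-1:ℂ)*p^2*A^7*V^5*U^3*x^2*Complex.I + p^2*A^7*V^5*U^2*W*x^6*Complex.I + (-1:ℂ)*p^2*A^7*V^5*U^2*W*x^2*Complex.I + p^2*A^7*V^5*U*W^2*x^6*Complex.I + (-1:ℂ)*p^2*A^7*V^5*U*W^2*x^2*Complex.I + p^2*A^7*V^5*W^3*x^6*Complex.I + (-1:ℂ)*p^2*A^7*V^5*W^3*x^2*Complex.I + p^2*A^7*V^4*U^3*W*x^6 + (2:ℂ)*p^2*A^7*V^4*U^3*W*x^4 + p^2*A^7*V^4*U^3*W*x^2 + (-1:ℂ)*p^2*A^7*V^4*U^2*W^2*x^6 + (-2:ℂ)*p^2*A^7*V^4*U^2*W^2*x^4 + (-1:ℂ)*p^2*A^7*V^4*U^2*W^2*x^2 + p^2*A^7*V^4*U*W^3*x^6 + (2:ℂ)*p^2*A^7*V^4*U*W^3*x^4 + p^2*A^7*V^4*U*W^3*x^2 + (-1:ℂ)*p^2*A^6*V^6*U*x^6*Complex.I^2 + (-3:ℂ)*p^2*A^6*V^6*U*x^4*Complex.I^2 + (-1:ℂ)*p^2*A^6*V^6*U*x^2*Complex.I^2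 + (-1:ℂ)*p^2*A^6*V^6*W*x^6*Complex.I^2 + (-3:ℂ)*p^2*A^6*V^6*W*x^4*Complex.I^2 + (-1:ℂ)*p^2*A^6*V^6*W*x^2*Complex.I^2 + (-1:ℂ)*p^2*A^6*V^5*U^2*x^6*Complex.I + p^2*A^6*V^5*U^2*x^2*Complex.I + (-2:ℂ)*p^2*A^6*V^5*U*W*x^6*Complex.I + (2:ℂ)*p^2*A^6*V^5*U*W*x^2*Complex.I + (-1:ℂ)*p^2*A^6*V^5*W^2*x^6*Complex.I + p^2*A^6*V^5*W^2*x^2*Complex.I + p^2*A^6*V^4*U^3*x^4 + (-1:ℂ)*p^2*A^6*V^4*U^2*W*x^6 + (-1:ℂ)*p^2*A^6*V^4*U^2*W*x^4 + (-1:ℂ)*p^2*A^6*V^4*U^2*W*x^2 + (-1:ℂ)*p^2*A^6*V^4*U*W^2*x^6 + (-1:ℂ)*p^2*A^6*V^4*U*W^2*x^4 + (-1:ℂ)*p^2*A^6*V^4*U*W^2*x^2 + p^2*A^6*V^4*W^3*x^4 + p^2*A^5*V^6*x^7*Complex.I^2 + (4:ℂ)*p^2*A^5*V^6*x^5*Complex.I^2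 + (4:ℂ)*p^2*A^5*V^6*x^3*Complex.I^2 + p^2*A^5*V^6*x*Complex.I^2 + p^2*A^5*V^5*U*x^7*Complex.I + p^2*A^5*V^5*U*x^5*Complex.I + (-1:ℂ)*p^2*A^5*V^5*U*x^3*Complex.I + (-1:ℂ)*p^2*A^5*V^5*U*x*Complex.I + p^2*A^5*V^5*W*x^7*Complex.I + p^2*A^5*V^5*W*x^5*Complex.I + (-1:ℂ)*p^2*A^5*V^5*W*x^3*Complex.I + (-1:ℂ)*p^2*A^5*V^5*W*x*Complex.I + (-1:ℂ)*p^2*A^5*V^4*U^2*x^5 + (-1:ℂ)*p^2*A^5*V^4*U^2*x^3 + p^2*A^5*V^4*U*W*x^7 + (3:ℂ)*p^2*A^5*V^4*U*W*x^5 + (3:ℂ)*p^2*A^5*V^4*U*W*x^3 + p^2*A^5*V^4*U*W*x + (-1:ℂ)*p^2*A^5*V^4*W^2*x^5 + (-1:ℂ)*p^2*A^5*V^4*W^2*x^3 + p^2*A^4*V^4*U*x^5 + p^2*A^4*V^4*U*x^3 + p^2*A^4*V^4*W*x^5 + p^2*A^4*V^4*W*x^3 + (-1:ℂ)*p^2*A^3*V^4*x^6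 + (-2:ℂ)*p^2*A^3*V^4*x^4 + (-1:ℂ)*p^2*A^3*V^4*x^2) * Complex.I_sq

/-- The phase factor. -/
noncomputable def Eδ (a v : ℝ) : ℂ := Complex.exp (2 * Complex.I * a * v)

/-- First denominator. -/
noncomputable def D1δ (α₀ α₁ a v : ℝ) : ℂ :=
  (a : ℂ) ^ 2 * (4 * π * α₀ - Complex.I * v) * (4 * π * α₁ - Complex.I * v) - Eδ a v

/-- Second denominator. -/
noncomputable def D2δ (α₀ α₁ a v : ℝ) : ℂ :=
  (a : ℂ) ^ 2 * (4 * π * α₀ + Complex.I * v) * (4 * π * α₁ + Complex.I * v) - (Eδ a v)⁻¹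

/-- canonical bounded combination of phases -/
noncomputable def Gδ (a : ℝ) (c₀ c₁ c₂ c₃ c₄ : ℂ) (v : ℝ) : ℂ :=
  c₀ + c₁ * Eδ a v + c₂ * (Eδ a v)⁻¹ + c₃ * (Eδ a v) ^ 2 + c₄ * ((Eδ a v)⁻¹) ^ 2

/-- numerator of the error term -/
noncomputable def Numδ (α₀ α₁ a v : ℝ) : ℂ :=
  (v : ℂ) ^ 3 * Gδ a 0
      (-(Complex.I * ((a:ℂ)^3 - (a:ℂ)^4 * (4*(π:ℂ)*α₀ + 4*(π:ℂ)*α₁))))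
      (Complex.I * ((a:ℂ)^3 - (a:ℂ)^4 * (4*(π:ℂ)*α₀ + 4*(π:ℂ)*α₁))) 0 0 v
  + (v : ℂ) ^ 2 * Gδ a
      (-((a:ℂ)^5) * ((4*(π:ℂ)*α₀)^3 + (4*(π:ℂ)*α₁)^3))
      (-(3/2 : ℂ) * (a:ℂ)^3 * (4*(π:ℂ)*α₀ + 4*(π:ℂ)*α₁)
          + (a:ℂ)^4 * ((4*(π:ℂ)*α₀)^2 + (4*(π:ℂ)*α₀)*(4*(π:ℂ)*α₁) + (4*(π:ℂ)*α₁)^2))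
      (-(3/2 : ℂ) * (a:ℂ)^3 * (4*(π:ℂ)*α₀ + 4*(π:ℂ)*α₁)
          + (a:ℂ)^4 * ((4*(π:ℂ)*α₀)^2 + (4*(π:ℂ)*α₀)*(4*(π:ℂ)*α₁) + (4*(π:ℂ)*α₁)^2))
      ((a:ℂ)^2) ((a:ℂ)^2) v
  + (v : ℂ) * Gδ a 0
      (Complex.I * (a:ℂ)^3 * (4*(π:ℂ)*α₀ + 4*(π:ℂ)*α₁)^2)
      (-(Complex.I * (a:ℂ)^3 * (4*(π:ℂ)*α₀ + 4*(π:ℂ)*α₁)^2))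
      (-(Complex.I * (a:ℂ)^2 * (4*(π:ℂ)*α₀ + 4*(π:ℂ)*α₁)))
      (Complex.I * (a:ℂ)^2 * (4*(π:ℂ)*α₀ + 4*(π:ℂ)*α₁)) v
  + Gδ a
      (-((a:ℂ) * (4*(π:ℂ)*α₀ + 4*(π:ℂ)*α₁)) - 2*(a:ℂ)^2*(4*(π:ℂ)*α₀)*(4*(π:ℂ)*α₁)
          - (a:ℂ)^5*(4*(π:ℂ)*α₀)^2*(4*(π:ℂ)*α₁)^2*(4*(π:ℂ)*α₀ + 4*(π:ℂ)*α₁))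
      (1 + (a:ℂ)^3*(4*(π:ℂ)*α₀)*(4*(π:ℂ)*α₁)*(4*(π:ℂ)*α₀ + 4*(π:ℂ)*α₁)
          + (a:ℂ)^4*(4*(π:ℂ)*α₀)^2*(4*(π:ℂ)*α₁)^2)
      (1 + (a:ℂ)^3*(4*(π:ℂ)*α₀)*(4*(π:ℂ)*α₁)*(4*(π:ℂ)*α₀ + 4*(π:ℂ)*α₁)
          + (a:ℂ)^4*(4*(π:ℂ)*α₀)^2*(4*(π:ℂ)*α₁)^2)
      (-((a:ℂ)^2)*(4*(π:ℂ)*α₀)*(4*(π:ℂ)*α₁))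
      (-((a:ℂ)^2)*(4*(π:ℂ)*α₀)*(4*(π:ℂ)*α₁)) v

lemma normEδ (a v : ℝ) : ‖Eδ a v‖ = 1 := by
  rw [Eδ, Complex.norm_exp]
  have : (2 * Complex.I * (a:ℝ) * (v:ℝ)).re = 0 := by simp
  rw [this, Real.exp_zero]

lemma normEδinv (a v : ℝ) : ‖(Eδ a v)⁻¹‖ = 1 := by
  rw [norm_inv, normEδ, inv_one]

set_option maxHeartbeats 1000000 in
lemma keyIdentity (α₀ α₁ a v : ℝ) (ha : (a:ℂ) ≠ 0) (hv : (v:ℂ) ≠ 0)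
    (hD1 : D1δ α₀ α₁ a v ≠ 0) (hD2 : D2δ α₀ α₁ a v ≠ 0) :
    relSpecMeasureTwoDelta α₀ α₁ a v -
      (((-2 * Real.cos (2 * a * v) + 4 * π * (α₀ + α₁) * a) / (π * a * v ^ 2) : ℝ) : ℂ)
    = Numδ α₀ α₁ a v / (((π:ℝ):ℂ) * a * (v:ℂ)^2 * D1δ α₀ α₁ a v * D2δ α₀ α₁ a v) := by
  have hπ : ((π:ℝ):ℂ) ≠ 0 := by exact_mod_cast Real.pi_ne_zero
  have hx : Complex.exp (2 * Complex.I * a * v) ≠ 0 := Complex.exp_ne_zero _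
  have hnegE : Complex.exp (-(2 * Complex.I * (a:ℂ) * (v:ℂ)))
      = (Complex.exp (2 * Complex.I * (a:ℂ) * (v:ℂ)))⁻¹ := Complex.exp_neg _
  have hcos : Complex.cos (2 * (a:ℂ) * (v:ℂ))
      = (Complex.exp (2 * Complex.I * (a:ℂ) * (v:ℂ))
        + (Complex.exp (2 * Complex.I * (a:ℂ) * (v:ℂ)))⁻¹) / 2 := by
    rw [Complex.cos, ← hnegE]
    congr 2 <;> ring
  have halg := algDelta ((π:ℝ):ℂ) (a:ℂ) (v:ℂ) (4*(π:ℂ)*α₀) (4*(π:ℂ)*α₁)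
      (Complex.exp (2 * Complex.I * (a:ℂ) * (v:ℂ))) hπ ha hv hx
      (by unfold D1δ Eδ at hD1; exact hD1) (by unfold D2δ Eδ at hD2; exact hD2)
  unfold relSpecMeasureTwoDelta Numδ D1δ D2δ Gδ Eδ
  rw [hnegE]
  push_cast
  rw [hcos]
  exact Eq.trans (by ring) (halg.trans (by ring))

lemma groupO (a : ℝ) (c₀ c₁ c₂ c₃ c₄ : ℂ) :
    (fun v : ℝ => Gδ a c₀ c₁ c₂ c₃ c₄ v) =O[atTop] (fun _ : ℝ => (1:ℝ)) := by
  refine IsBigO.of_bound (‖c₀‖ + ‖c₁‖ + ‖c₂‖ + ‖c₃‖ + ‖c₄‖) (Filter.Eventually.of_forall fun v => ?_)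
  have h1 := normEδ a v
  have h2 := normEδinv a v
  have e1 : ‖c₁ * Eδ a v‖ = ‖c₁‖ := by rw [norm_mul, h1, mul_one]
  have e2 : ‖c₂ * (Eδ a v)⁻¹‖ = ‖c₂‖ := by rw [norm_mul, h2, mul_one]
  have e3 : ‖c₃ * (Eδ a v) ^ 2‖ = ‖c₃‖ := by rw [norm_mul, norm_pow, h1, one_pow, mul_one]
  have e4 : ‖c₄ * ((Eδ a v)⁻¹) ^ 2‖ = ‖c₄‖ := by rw [norm_mul, norm_pow, h2, one_pow, mul_one]
  simp only [norm_one, mul_one, Gδ]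
  calc ‖c₀ + c₁ * Eδ a v + c₂ * (Eδ a v)⁻¹ + c₃ * (Eδ a v) ^ 2 + c₄ * ((Eδ a v)⁻¹) ^ 2‖
      ≤ ‖c₀ + c₁ * Eδ a v + c₂ * (Eδ a v)⁻¹ + c₃ * (Eδ a v) ^ 2‖ + ‖c₄ * ((Eδ a v)⁻¹) ^ 2‖ :=
        norm_add_le _ _
    _ ≤ (‖c₀ + c₁ * Eδ a v + c₂ * (Eδ a v)⁻¹‖ + ‖c₃ * (Eδ a v) ^ 2‖) + ‖c₄ * ((Eδ a v)⁻¹) ^ 2‖ :=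
        by linarith [norm_add_le (c₀ + c₁ * Eδ a v + c₂ * (Eδ a v)⁻¹) (c₃ * (Eδ a v) ^ 2)]
    _ ≤ ((‖c₀ + c₁ * Eδ a v‖ + ‖c₂ * (Eδ a v)⁻¹‖) + ‖c₃ * (Eδ a v) ^ 2‖) + ‖c₄ * ((Eδ a v)⁻¹) ^ 2‖ :=
        by linarith [norm_add_le (c₀ + c₁ * Eδ a v) (c₂ * (Eδ a v)⁻¹)]
    _ ≤ (((‖c₀‖ + ‖c₁ * Eδ a v‖) + ‖c₂ * (Eδ a v)⁻¹‖) + ‖c₃ * (Eδ a v) ^ 2‖) + ‖c₄ * ((Eδ a v)⁻¹) ^ 2‖ :=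
        by linarith [norm_add_le c₀ (c₁ * Eδ a v)]
    _ = ‖c₀‖ + ‖c₁‖ + ‖c₂‖ + ‖c₃‖ + ‖c₄‖ := by rw [e1, e2, e3, e4]

lemma powGroupO (a : ℝ) (k : ℕ) (hk : k ≤ 3) (c₀ c₁ c₂ c₃ c₄ : ℂ) :
    (fun v : ℝ => (v : ℂ) ^ k * Gδ a c₀ c₁ c₂ c₃ c₄ v) =O[atTop] (fun v : ℝ => v ^ 3) := by
  have h1 : (fun v : ℝ => (v : ℂ) ^ k) =O[atTop] (fun v : ℝ => v ^ 3) := by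
    refine IsBigO.of_bound 1 ?_
    filter_upwards [eventually_ge_atTop (1:ℝ)] with v hv
    have hv0 : (0:ℝ) ≤ v := le_trans zero_le_one hv
    rw [norm_pow, Complex.norm_real, Real.norm_of_nonneg hv0, one_mul,
      Real.norm_of_nonneg (pow_nonneg hv0 3)]
    exact pow_le_pow_right₀ hv hk
  have := h1.mul (groupO a c₀ c₁ c₂ c₃ c₄)
  simpa using this

lemma NumδO (α₀ α₁ a : ℝ) :
    (fun v : ℝ => Numδ α₀ α₁ a v) =O[atTop] (fun v : ℝ => v ^ 3) := by
  unfold Numδ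
  refine IsBigO.add (IsBigO.add (IsBigO.add ?_ ?_) ?_) ?_
  · exact powGroupO a 3 le_rfl _ _ _ _ _
  · exact powGroupO a 2 (by norm_num) _ _ _ _ _
  · simpa using powGroupO a 1 (by norm_num) _ _ _ _ _
  · simpa using powGroupO a 0 (by norm_num) _ _ _ _ _

lemma D1δ_lb (α₀ α₁ a v : ℝ) (ha : 0 < a) (h2 : 2/a ≤ v) (h1 : 1 ≤ v) :
    a^2 * v^2 / 2 ≤ ‖D1δ α₀ α₁ a v‖ ∧ a^2 * v^2 / 2 ≤ ‖D2δ α₀ α₁ a v‖ := by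
  have hv0 : (0:ℝ) ≤ v := le_trans zero_le_one h1
  have hav : 2 ≤ a * v := by
    rw [div_le_iff₀ ha] at h2; linarith [h2]
  have hav2 : 2 ≤ a^2 * v^2 := by nlinarith
  have hfac1 : v ≤ ‖(4 * (π:ℂ) * α₀ - Complex.I * v)‖ := by
    have h := Complex.abs_im_le_norm (4 * (π:ℂ) * α₀ - Complex.I * v)
    simpa [_root_.abs_of_nonneg hv0] using h
  have hfac1' : v ≤ ‖(4 * (π:ℂ) * α₁ - Complex.I * v)‖ := by
    have h := Complex.abs_im_le_norm (4 * (π:ℂ) * α₁ - Complex.I * v)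
    simpa [_root_.abs_of_nonneg hv0] using h
  have hfac2 : v ≤ ‖(4 * (π:ℂ) * α₀ + Complex.I * v)‖ := by
    have h := Complex.abs_im_le_norm (4 * (π:ℂ) * α₀ + Complex.I * v)
    simpa [_root_.abs_of_nonneg hv0] using h
  have hfac2' : v ≤ ‖(4 * (π:ℂ) * α₁ + Complex.I * v)‖ := by
    have h := Complex.abs_im_le_norm (4 * (π:ℂ) * α₁ + Complex.I * v)
    simpa [_root_.abs_of_nonneg hv0] using h
  have hA2 : ‖((a:ℂ))^2‖ = a^2 := by
    rw [norm_pow, Complex.norm_real, Real.norm_eq_abs, sq_abs]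
  constructor
  · have hmain : a^2 * v^2 ≤ ‖(a:ℂ)^2 * (4 * (π:ℂ) * α₀ - Complex.I * v) * (4 * (π:ℂ) * α₁ - Complex.I * v)‖ := by
      rw [norm_mul, norm_mul, hA2]
      have := mul_le_mul hfac1 hfac1' hv0 (norm_nonneg _)
      calc a^2 * v^2 = a^2 * (v * v) := by ring
        _ ≤ a^2 * (‖(4 * (π:ℂ) * α₀ - Complex.I * v)‖ * ‖(4 * (π:ℂ) * α₁ - Complex.I * v)‖) := by
            apply mul_le_mul_of_nonneg_left _ (sq_nonneg a)
            exact this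
        _ = a^2 * ‖(4 * (π:ℂ) * α₀ - Complex.I * v)‖ * ‖(4 * (π:ℂ) * α₁ - Complex.I * v)‖ := by ring
    have hnorm := norm_sub_norm_le ((a:ℂ)^2 * (4 * (π:ℂ) * α₀ - Complex.I * v) * (4 * (π:ℂ) * α₁ - Complex.I * v)) (Eδ a v)
    rw [normEδ] at hnorm
    have : a^2 * v^2 - 1 ≤ ‖D1δ α₀ α₁ a v‖ := by
      unfold D1δ
      push_cast at hmain ⊢
      linarith [hmain, hnorm]
    linarith
  · have hmain : a^2 * v^2 ≤ ‖(a:ℂ)^2 * (4 * (π:ℂ) * α₀ + Complex.I * v) * (4 * (π:ℂ) * α₁ + Complex.I * v)‖ := by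
      rw [norm_mul, norm_mul, hA2]
      have := mul_le_mul hfac2 hfac2' hv0 (norm_nonneg _)
      calc a^2 * v^2 = a^2 * (v * v) := by ring
        _ ≤ a^2 * (‖(4 * (π:ℂ) * α₀ + Complex.I * v)‖ * ‖(4 * (π:ℂ) * α₁ + Complex.I * v)‖) := by
            apply mul_le_mul_of_nonneg_left _ (sq_nonneg a)
            exact this
        _ = a^2 * ‖(4 * (π:ℂ) * α₀ + Complex.I * v)‖ * ‖(4 * (π:ℂ) * α₁ + Complex.I * v)‖ := by ring
    have hnorm := norm_sub_norm_le ((a:ℂ)^2 * (4 * (π:ℂ) * α₀ + Complex.I * v) * (4 * (π:ℂ) * α₁ + Complex.I * v)) ((Eδ a v)⁻¹)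
    rw [normEδinv] at hnorm
    have : a^2 * v^2 - 1 ≤ ‖D2δ α₀ α₁ a v‖ := by
      unfold D2δ
      push_cast at hmain ⊢
      linarith [hmain, hnorm]
    linarith

/-- Large-`v` asymptotics of the relative spectral measure of two delta interactions:
`e(v) = (-2cos(2av) + 4π(α₀+α₁)a)/(πav²) + O(v⁻³)` as `v → ∞`. -/
theorem relSpecMeasureTwoDelta_asymptotic_infty (α₀ α₁ a : ℝ) (ha : 0 < a)
    (hα : 1 ≤ 4 * π ^ 2 * α₀ * α₁ * a ^ 2) :
    (fun v : ℝ => relSpecMeasureTwoDelta α₀ α₁ a v -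
        (((-2 * Real.cos (2 * a * v) + 4 * π * (α₀ + α₁) * a) / (π * a * v ^ 2) : ℝ) : ℂ))
      =O[atTop] fun v : ℝ => v ^ (-3 : ℝ) := by
  have hπ : (0:ℝ) < π := Real.pi_pos
  have ha' : (a:ℂ) ≠ 0 := by exact_mod_cast ha.ne'
  -- the inverse of the denominator is O(v⁻⁶)
  have hinv : (fun v : ℝ => (((π:ℝ):ℂ) * a * (v:ℂ)^2 * D1δ α₀ α₁ a v * D2δ α₀ α₁ a v)⁻¹)
      =O[atTop] (fun v : ℝ => (v ^ 6)⁻¹) := by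
    refine IsBigO.of_bound (4 / (π * a^5)) ?_
    filter_upwards [eventually_ge_atTop (1:ℝ), eventually_ge_atTop (2/a)] with v h1 h2
    have hv0 : (0:ℝ) < v := lt_of_lt_of_le one_pos h1
    obtain ⟨hb1, hb2⟩ := D1δ_lb α₀ α₁ a v ha h2 h1
    have hq : (0:ℝ) < a^2 * v^2 / 2 := by positivity
    have hnorm : π * a * v^2 * (a^2*v^2/2) * (a^2*v^2/2)
        ≤ ‖((π:ℝ):ℂ) * a * (v:ℂ)^2 * D1δ α₀ α₁ a v * D2δ α₀ α₁ a v‖ := by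
      rw [norm_mul, norm_mul, norm_mul, norm_mul]
      have hπn : ‖((π:ℝ):ℂ)‖ = π := by
        rw [Complex.norm_real, Real.norm_of_nonneg hπ.le]
      have han : ‖((a:ℝ):ℂ)‖ = a := by
        rw [Complex.norm_real, Real.norm_of_nonneg ha.le]
      have hvn : ‖((v:ℝ):ℂ)^2‖ = v^2 := by
        rw [norm_pow, Complex.norm_real, Real.norm_of_nonneg hv0.le]
      rw [hπn, han, hvn]
      have h3 : (0:ℝ) ≤ π * a * v^2 := by positivity
      calc π * a * v^2 * (a^2*v^2/2) * (a^2*v^2/2)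
          ≤ π * a * v^2 * ‖D1δ α₀ α₁ a v‖ * (a^2*v^2/2) := by
            apply mul_le_mul_of_nonneg_right _ hq.le
            exact mul_le_mul_of_nonneg_left hb1 h3
        _ ≤ π * a * v^2 * ‖D1δ α₀ α₁ a v‖ * ‖D2δ α₀ α₁ a v‖ := by
            apply mul_le_mul_of_nonneg_left hb2
            positivity
    have hpos : (0:ℝ) < π * a * v^2 * (a^2*v^2/2) * (a^2*v^2/2) := by positivity
    rw [norm_inv]
    rw [Real.norm_of_nonneg (by positivity : (0:ℝ) ≤ (v^6)⁻¹)]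
    have hle : ‖((π:ℝ):ℂ) * a * (v:ℂ)^2 * D1δ α₀ α₁ a v * D2δ α₀ α₁ a v‖⁻¹
        ≤ (π * a * v^2 * (a^2*v^2/2) * (a^2*v^2/2))⁻¹ :=
      inv_anti₀ hpos hnorm
    refine le_trans hle (le_of_eq ?_)
    field_simp
    ring
  have hNum := NumδO α₀ α₁ a
  have hmul := hNum.mul hinv
  refine hmul.congr' ?_ ?_
  · -- the difference eventually equals Num * Den⁻¹
    filter_upwards [eventually_ge_atTop (1:ℝ), eventually_ge_atTop (2/a)] with v h1 h2
    have hv0 : (0:ℝ) < v := lt_of_lt_of_le one_pos h1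
    have hv' : ((v:ℝ):ℂ) ≠ 0 := by exact_mod_cast hv0.ne'
    obtain ⟨hb1, hb2⟩ := D1δ_lb α₀ α₁ a v ha h2 h1
    have hq : (0:ℝ) < a^2 * v^2 / 2 := by positivity
    have hD1 : D1δ α₀ α₁ a v ≠ 0 := by
      intro h; rw [h, norm_zero] at hb1; linarith
    have hD2 : D2δ α₀ α₁ a v ≠ 0 := by
      intro h; rw [h, norm_zero] at hb2; linarith
    rw [div_eq_mul_inv] at *
    exact (keyIdentity α₀ α₁ a v ha' hv' hD1 hD2).symm ▸ rfl
  · filter_upwards [eventually_ge_atTop (1:ℝ)] with v h1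
    have hv0 : (0:ℝ) < v := lt_of_lt_of_le one_pos h1
    rw [Real.rpow_neg hv0.le]
    rw [show ((3:ℝ) = ((3:ℕ):ℝ)) from by norm_num, Real.rpow_natCast]
    field_simp
end

section
/- As v → 0⁺, e(v; -Δ_{α,a}, -Δ) = (a/π)·(4π(α₀+α₁)a + 2)/(16π²α₀α₁a² - 1) + O(v), provided 16π²α₀α₁a² ≠ 1. -/
open MeasureTheory Real Filter Set Asymptotics Topology

/-- Small-`v` behaviour of the relative spectral measure of two delta interactions:
`e(v) = (a/π)(4π(α₀+α₁)a + 2)/(16π²α₀α₁a² - 1) + O(v)` as `v → 0⁺`, provided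
`16π²α₀α₁a² ≠ 1`. -/
theorem relSpecMeasureTwoDelta_asymptotic_zero (α₀ α₁ a : ℝ) (ha : 0 < a)
    (hα : 16 * π ^ 2 * α₀ * α₁ * a ^ 2 ≠ 1) :
    (fun v : ℝ => relSpecMeasureTwoDelta α₀ α₁ a v -
        ((a / π * ((4 * π * (α₀ + α₁) * a + 2) / (16 * π ^ 2 * α₀ * α₁ * a ^ 2 - 1)) : ℝ) : ℂ))
      =O[𝓝[>] (0:ℝ)] fun v : ℝ => v := by
  have hπ : (π : ℝ) ≠ 0 := Real.pi_ne_zero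
  have hπc : (π : ℂ) ≠ 0 := by exact_mod_cast hπ
  have hc : ((16 * π ^ 2 * α₀ * α₁ * a ^ 2 - 1 : ℝ) : ℂ) ≠ 0 := by
    exact_mod_cast sub_ne_zero.mpr hα
  have hre : Differentiable ℝ (fun v : ℝ => (v : ℂ)) := Complex.ofRealCLM.differentiable
  -- the two denominators
  set D₁ : ℝ → ℂ := fun v =>
    (a : ℂ) ^ 2 * (4 * π * α₀ - Complex.I * v) * (4 * π * α₁ - Complex.I * v) -
      Complex.exp (2 * Complex.I * a * v) with hD₁def
  set D₂ : ℝ → ℂ := fun v =>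
    (a : ℂ) ^ 2 * (4 * π * α₀ + Complex.I * v) * (4 * π * α₁ + Complex.I * v) -
      Complex.exp (-(2 * Complex.I * a * v)) with hD₂def
  have hD₁0 : D₁ 0 = ((16 * π ^ 2 * α₀ * α₁ * a ^ 2 - 1 : ℝ) : ℂ) := by
    simp [hD₁def]; push_cast; ring
  have hD₂0 : D₂ 0 = ((16 * π ^ 2 * α₀ * α₁ * a ^ 2 - 1 : ℝ) : ℂ) := by
    simp [hD₂def]; push_cast; ring
  have hD₁ : Differentiable ℝ D₁ := by
    apply Differentiable.sub
    · exact (((differentiable_const _).sub (hre.const_mul _)).const_mul _).mul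
        ((differentiable_const _).sub (hre.const_mul _))
    · exact Complex.differentiable_exp.comp (hre.const_mul _)
  have hD₂ : Differentiable ℝ D₂ := by
    apply Differentiable.sub
    · exact (((differentiable_const _).add (hre.const_mul _)).const_mul _).mul
        ((differentiable_const _).add (hre.const_mul _))
    · exact Complex.differentiable_exp.comp ((hre.const_mul _).neg)
  have hN₁ : Differentiable ℝ (fun v : ℝ =>
      2 * (π:ℂ) * (α₀ + α₁) * a - Complex.I * a * v + Complex.exp (2 * Complex.I * a * v)) :=
    ((differentiable_const _).sub (hre.const_mul _)).add
      (Complex.differentiable_exp.comp (hre.const_mul _))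
  have hN₂ : Differentiable ℝ (fun v : ℝ =>
      2 * (π:ℂ) * (α₀ + α₁) * a + Complex.I * a * v + Complex.exp (-(2 * Complex.I * a * v))) :=
    ((differentiable_const _).add (hre.const_mul _)).add
      (Complex.differentiable_exp.comp ((hre.const_mul _).neg))
  have hdiff : DifferentiableAt ℝ (fun v => relSpecMeasureTwoDelta α₀ α₁ a v) 0 := by
    unfold relSpecMeasureTwoDelta
    apply DifferentiableAt.const_mul
    apply DifferentiableAt.add
    · exact (hN₁ 0).div (hD₁ 0) (by show D₁ 0 ≠ 0; rw [hD₁0]; exact hc)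
    · exact (hN₂ 0).div (hD₂ 0) (by show D₂ 0 ≠ 0; rw [hD₂0]; exact hc)
  have hc' : 16 * (π:ℂ) ^ 2 * (α₀:ℂ) * (α₁:ℂ) * (a:ℂ) ^ 2 - 1 ≠ 0 := by
    exact_mod_cast sub_ne_zero.mpr hα
  have hO := hdiff.isBigO_sub
  have hval : relSpecMeasureTwoDelta α₀ α₁ a 0 =
      ((a / π * ((4 * π * (α₀ + α₁) * a + 2) / (16 * π ^ 2 * α₀ * α₁ * a ^ 2 - 1)) : ℝ) : ℂ) := by
    unfold relSpecMeasureTwoDelta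
    simp only [Complex.ofReal_zero, mul_zero, neg_zero, sub_zero, add_zero, Complex.exp_zero]
    have h1 : ((a : ℂ) ^ 2 * (4 * π * α₀) * (4 * π * α₁) - 1) =
        ((16 * π ^ 2 * α₀ * α₁ * a ^ 2 - 1 : ℝ) : ℂ) := by push_cast; ring
    rw [h1]
    push_cast
    rw [← add_div, ← mul_div_assoc, ← mul_div_assoc]
    rw [div_eq_div_iff hc' hc']
    ring
  have hO' : (fun v : ℝ => relSpecMeasureTwoDelta α₀ α₁ a v -
      relSpecMeasureTwoDelta α₀ α₁ a 0) =O[𝓝 (0:ℝ)] fun v : ℝ => v := by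
    simpa using hO
  rw [hval] at hO'
  exact hO'.mono nhdsWithin_le_nhds
end

section
/- For a > 0 and real constants c₁, c₂, the function z_B(s) = -∫₁^∞ v^{-2s-2}·(2cos(2av) - 4π(α₀+α₁)a)/(πa) dv, defined for Re(s) > -1/2, extends meromorphically; its extension has a simple pole at s = -1/2 with residue 2(α₀+α₁), and finite part at s = -1/2 equal to 2·ci(2a)/(πa), where ci is the cosine integral ci(x) = -∫_x^∞ cos(t)/t dt. -/
open MeasureTheory Real Filter Set Topology

noncomputable section ZBaux

namespace ZBaux

def ff (a : ℝ) (c : ℂ) (v : ℝ) : ℂ := (v : ℂ) ^ c * ((Real.cos (2 * a * v) : ℝ) : ℂ)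

def Phi (a : ℝ) (s : ℂ) (v : ℝ) : ℂ :=
  (v : ℂ) ^ (-2 * s - 2) * ((Real.sin (2 * a * v) / (2 * a) : ℝ) : ℂ)
    - (2 * s + 2) * (v : ℂ) ^ (-2 * s - 3) * ((Real.cos (2 * a * v) / (4 * a ^ 2) : ℝ) : ℂ)

def CC (a : ℝ) (s : ℂ) : ℂ := (2 * s + 2) * (2 * s + 3) / (4 * (a : ℂ) ^ 2)

def G (a : ℝ) (s : ℂ) : ℂ := ∫ v in Ioi (1 : ℝ), ff a (-2 * s - 4) v

lemma hasDerivAt_cpow_ofReal {v : ℝ} (hv : 0 < v) {c : ℂ} (hc : c ≠ 0) :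
    HasDerivAt (fun y : ℝ => (y : ℂ) ^ c) (c * (v : ℂ) ^ (c - 1)) v := by
  have hr : c - 1 ≠ -1 := by
    intro h
    exact hc (by linear_combination h)
  have h := (hasDerivAt_ofReal_cpow_const' hv.ne' hr).const_mul c
  have he : (fun y : ℝ => c * ((y : ℂ) ^ (c - 1 + 1) / (c - 1 + 1))) =
      fun y : ℝ => (y : ℂ) ^ c := by
    funext y
    rw [sub_add_cancel]
    field_simp
  rwa [he] at h

lemma hasDerivAt_Phi {a : ℝ} (ha : 0 < a) {s : ℂ} (hs1 : s ≠ -1) (hs2 : s ≠ -(3/2))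
    {v : ℝ} (hv : 0 < v) :
    HasDerivAt (Phi a s) (ff a (-2 * s - 2) v + CC a s * ff a (-2 * s - 4) v) v := by
  have hc1 : (-2 * s - 2 : ℂ) ≠ 0 := by
    intro h; exact hs1 (by linear_combination -h/2)
  have hc2 : (-2 * s - 3 : ℂ) ≠ 0 := by
    intro h; exact hs2 (by linear_combination -h/2)
  have h1 : HasDerivAt (fun y : ℝ => (y : ℂ) ^ (-2 * s - 2))
      ((-2 * s - 2) * (v : ℂ) ^ (-2 * s - 3)) v := by
    have := hasDerivAt_cpow_ofReal hv hc1
    convert this using 2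
    ring
  have h2 : HasDerivAt (fun y : ℝ => (y : ℂ) ^ (-2 * s - 3))
      ((-2 * s - 3) * (v : ℂ) ^ (-2 * s - 4)) v := by
    have := hasDerivAt_cpow_ofReal hv hc2
    convert this using 2
    ring
  have hsin : HasDerivAt (fun y : ℝ => Real.sin (2 * a * y) / (2 * a))
      (Real.cos (2 * a * v)) v := by
    have hlin : HasDerivAt (fun y : ℝ => 2 * a * y) (2 * a) v := by
      simpa using (hasDerivAt_id v).const_mul (2 * a)
    have := ((Real.hasDerivAt_sin (2 * a * v)).comp v hlin).div_const (2 * a)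
    refine this.congr_deriv ?_
    field_simp
  have hcos : HasDerivAt (fun y : ℝ => Real.cos (2 * a * y) / (4 * a ^ 2))
      (-(Real.sin (2 * a * v) / (2 * a))) v := by
    have hlin : HasDerivAt (fun y : ℝ => 2 * a * y) (2 * a) v := by
      simpa using (hasDerivAt_id v).const_mul (2 * a)
    have := ((Real.hasDerivAt_cos (2 * a * v)).comp v hlin).div_const (4 * a ^ 2)
    refine this.congr_deriv ?_
    field_simp
    ring
  have h3 : HasDerivAt (fun y : ℝ => ((Real.sin (2 * a * y) / (2 * a) : ℝ) : ℂ))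
      ((Real.cos (2 * a * v) : ℝ) : ℂ) v := hsin.ofReal_comp
  have h4 : HasDerivAt (fun y : ℝ => ((Real.cos (2 * a * y) / (4 * a ^ 2) : ℝ) : ℂ))
      ((-(Real.sin (2 * a * v) / (2 * a)) : ℝ) : ℂ) v := hcos.ofReal_comp
  have h12 := h1.mul h3
  have h34 := (h2.const_mul (2 * s + 2)).mul h4
  have htot := h12.sub h34
  have hfun : (fun y : ℝ => (y : ℂ) ^ (-2 * s - 2) * ((Real.sin (2 * a * y) / (2 * a) : ℝ) : ℂ)
      - (2 * s + 2) * (y : ℂ) ^ (-2 * s - 3) * ((Real.cos (2 * a * y) / (4 * a ^ 2) : ℝ) : ℂ))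
      = Phi a s := by
    funext y; simp [Phi, mul_assoc]
  replace htot : HasDerivAt (Phi a s) _ v := htot
  convert htot using 1
  have ha' : (a : ℂ) ≠ 0 := Complex.ofReal_ne_zero.mpr ha.ne'
  simp only [ff, CC]
  push_cast
  field_simp
  ring_nf


lemma continuousOn_ff (a : ℝ) (c : ℂ) : ContinuousOn (ff a c) (Ioi 0) := by
  apply ContinuousOn.mul
  · exact fun v hv =>
      (Complex.continuousAt_ofReal_cpow_const v c (Or.inr (ne_of_gt hv))).continuousWithinAt
  · exact (Complex.continuous_ofReal.comp
      (Real.continuous_cos.comp (continuous_const.mul continuous_id))).continuousOn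

lemma intervalIntegrable_ff (a : ℝ) (c : ℂ) {R : ℝ} (hR : 1 ≤ R) :
    IntervalIntegrable (ff a c) volume 1 R := by
  apply ContinuousOn.intervalIntegrable
  apply (continuousOn_ff a c).mono
  rw [uIcc_of_le hR]
  exact fun v hv => lt_of_lt_of_le one_pos hv.1

lemma key_interval {a : ℝ} (ha : 0 < a) {s : ℂ} (hs1 : s ≠ -1) (hs2 : s ≠ -(3/2))
    {R : ℝ} (hR : 1 ≤ R) :
    ∫ v in (1:ℝ)..R, ff a (-2 * s - 2) v
      = Phi a s R - Phi a s 1 - CC a s * ∫ v in (1:ℝ)..R, ff a (-2 * s - 4) v := by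
  have h1 := intervalIntegrable_ff a (-2 * s - 2) hR
  have h2 := (intervalIntegrable_ff a (-2 * s - 4) hR).const_mul (CC a s)
  have hftc : ∫ v in (1:ℝ)..R, (ff a (-2 * s - 2) v + CC a s * ff a (-2 * s - 4) v)
      = Phi a s R - Phi a s 1 := by
    apply intervalIntegral.integral_eq_sub_of_hasDerivAt
    · intro v hv
      rw [uIcc_of_le hR] at hv
      exact hasDerivAt_Phi ha hs1 hs2 (lt_of_lt_of_le one_pos hv.1)
    · exact h1.add h2
  rw [intervalIntegral.integral_add h1 h2, intervalIntegral.integral_const_mul] at hftc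
  linear_combination hftc

lemma integrableOn_ff (a : ℝ) {c : ℂ} (hc : c.re < -1) : IntegrableOn (ff a c) (Ioi 1) := by
  have h := integrableOn_Ioi_cpow_of_lt hc one_pos
  have hb : IntegrableOn (fun v : ℝ => ((Real.cos (2 * a * v) : ℝ) : ℂ) * (v : ℂ) ^ c)
      (Ioi 1) := by
    apply h.bdd_mul (c := 1)
    · exact (Complex.continuous_ofReal.comp
        (Real.continuous_cos.comp (continuous_const.mul continuous_id))).aestronglyMeasurable
    · refine Eventually.of_forall fun v => ?_
      rw [Complex.norm_real]
      exact Real.abs_cos_le_one _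
  exact hb.congr (Filter.Eventually.of_forall fun v => mul_comm _ _)

lemma tendsto_Phi {a : ℝ} (ha : 0 < a) {s : ℂ} (hs : -1 < s.re) :
    Tendsto (fun R : ℝ => Phi a s R) atTop (𝓝 0) := by
  have e1 : (0:ℝ) < 2 * s.re + 2 := by linarith
  have e2 : (0:ℝ) < 2 * s.re + 3 := by linarith
  have hbd : ∀ᶠ R : ℝ in atTop, ‖Phi a s R‖ ≤ (fun R : ℝ => R ^ (-(2 * s.re + 2)) * (1 / (2 * a))
      + ‖2 * s + 2‖ * (R ^ (-(2 * s.re + 3)) * (1 / (4 * a ^ 2)))) R := by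
    filter_upwards [eventually_gt_atTop (0:ℝ)] with R hR
    have hb1 : ‖(R : ℂ) ^ (-2 * s - 2) * ((Real.sin (2 * a * R) / (2 * a) : ℝ) : ℂ)‖
        ≤ R ^ (-(2 * s.re + 2)) * (1 / (2 * a)) := by
      rw [norm_mul, Complex.norm_real, Real.norm_eq_abs, Complex.norm_cpow_eq_rpow_re_of_pos hR]
      have hre : (-2 * s - 2).re = -(2 * s.re + 2) := by
        simp [Complex.sub_re, Complex.mul_re]; ring
      rw [hre]
      apply mul_le_mul_of_nonneg_left _ (Real.rpow_nonneg hR.le _)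
      rw [abs_div, abs_of_pos (by positivity : (0:ℝ) < 2 * a), div_le_div_iff_of_pos_right]
      · exact Real.abs_sin_le_one _
      · positivity
    have hb2 : ‖(2 * s + 2) * (R : ℂ) ^ (-2 * s - 3) * ((Real.cos (2 * a * R) / (4 * a ^ 2) : ℝ) : ℂ)‖
        ≤ ‖2 * s + 2‖ * (R ^ (-(2 * s.re + 3)) * (1 / (4 * a ^ 2))) := by
      rw [norm_mul, norm_mul]
      rw [mul_assoc]
      apply mul_le_mul_of_nonneg_left _ (norm_nonneg _)
      rw [Complex.norm_cpow_eq_rpow_re_of_pos hR]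
      have hre : (-2 * s - 3).re = -(2 * s.re + 3) := by
        simp [Complex.sub_re, Complex.mul_re]; ring
      rw [hre, Complex.norm_real, Real.norm_eq_abs]
      apply mul_le_mul_of_nonneg_left _ (Real.rpow_nonneg hR.le _)
      rw [abs_div, abs_of_pos (by positivity : (0:ℝ) < 4 * a ^ 2), div_le_div_iff_of_pos_right]
      · exact Real.abs_cos_le_one _
      · positivity
    calc ‖Phi a s R‖ ≤ ‖(R : ℂ) ^ (-2 * s - 2) * ((Real.sin (2 * a * R) / (2 * a) : ℝ) : ℂ)‖
        + ‖(2 * s + 2) * (R : ℂ) ^ (-2 * s - 3) * ((Real.cos (2 * a * R) / (4 * a ^ 2) : ℝ) : ℂ)‖ :=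
          norm_sub_le _ _
      _ ≤ _ := add_le_add hb1 hb2
  apply squeeze_zero_norm' hbd
  · have t1 : Tendsto (fun R : ℝ => R ^ (-(2 * s.re + 2)) * (1 / (2 * a))) atTop (𝓝 0) := by
      simpa using (tendsto_rpow_neg_atTop e1).mul_const (1 / (2 * a))
    have t2 : Tendsto (fun R : ℝ => ‖2 * s + 2‖
        * (R ^ (-(2 * s.re + 3)) * (1 / (4 * a ^ 2)))) atTop (𝓝 0) := by
      have := ((tendsto_rpow_neg_atTop e2).mul_const (1 / (4 * a ^ 2))).const_mul
        (‖2 * s + 2‖)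
      simpa using this
    simpa using t1.add t2

lemma re_ne_1 {s : ℂ} (hs : -1 < s.re) : s ≠ -1 := by
  intro h; rw [h] at hs; norm_num at hs

lemma re_ne_32 {s : ℂ} (hs : -(3/2 : ℝ) < s.re) : s ≠ -(3/2) := by
  intro h; rw [h] at hs; norm_num at hs

lemma key_Ioi {a : ℝ} (ha : 0 < a) {s : ℂ} (hs : -(1/2 : ℝ) < s.re) :
    ∫ v in Ioi (1:ℝ), ff a (-2 * s - 2) v = -(Phi a s 1) - CC a s * G a s := by
  have hre1 : (-2 * s - 2).re < -1 := by
    simp only [Complex.sub_re, Complex.mul_re]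
    simp; linarith
  have hre2 : (-2 * s - 4).re < -1 := by
    simp only [Complex.sub_re, Complex.mul_re]
    simp; linarith
  have T1 := intervalIntegral_tendsto_integral_Ioi 1 (integrableOn_ff a hre1) tendsto_id
  have T2 := intervalIntegral_tendsto_integral_Ioi 1 (integrableOn_ff a hre2) tendsto_id
  have T3 : Tendsto (fun R : ℝ => Phi a s R - Phi a s 1
      - CC a s * ∫ v in (1:ℝ)..R, ff a (-2 * s - 4) v) atTop
      (𝓝 (0 - Phi a s 1 - CC a s * G a s)) :=
    ((tendsto_Phi ha (by linarith)).sub tendsto_const_nhds).sub (T2.const_mul _)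
  have heq : ∀ᶠ R : ℝ in atTop, (∫ v in (1:ℝ)..R, ff a (-2 * s - 2) v)
      = Phi a s R - Phi a s 1 - CC a s * ∫ v in (1:ℝ)..R, ff a (-2 * s - 4) v := by
    filter_upwards [eventually_ge_atTop (1:ℝ)] with R hR
    exact key_interval ha (re_ne_1 (by linarith)) (re_ne_32 (by linarith)) hR
  have := tendsto_nhds_unique T1 (T3.congr' (heq.mono fun R h => h.symm))
  rwa [zero_sub] at this

lemma measurable_ff (a : ℝ) (c : ℂ) :
    AEStronglyMeasurable (ff a c) (volume.restrict (Ioi (1:ℝ))) :=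
  ((continuousOn_ff a c).mono (fun v (hv : (1:ℝ) < v) => (lt_trans one_pos hv : (0:ℝ) < v))).aestronglyMeasurable
    measurableSet_Ioi

set_option maxHeartbeats 1000000 in
lemma differentiableAt_G {a : ℝ} (ha : 0 < a) {s₀ : ℂ} (hs₀ : -(3/2 : ℝ) < s₀.re) :
    DifferentiableAt ℂ (G a) s₀ := by
  set σ : ℝ := s₀.re with hσ
  set ε : ℝ := (σ + 3/2) / 2 with hε
  have hεpos : 0 < ε := by simp only [hε]; linarith
  have hσε : -(3/2 : ℝ) < σ - ε := by simp only [hε]; linarith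
  set p : ℝ := -2 * (σ - ε) - 4 with hp
  have hplt : p < -1 := by simp only [hp]; linarith
  set bound : ℝ → ℝ := fun v => 2 * (Real.log v * v ^ p) with hbound
  have h_meas : ∀ᶠ s in 𝓝 s₀,
      AEStronglyMeasurable (fun v => ff a (-2 * s - 4) v) (volume.restrict (Ioi (1:ℝ))) :=
    Eventually.of_forall fun s => measurable_ff a _
  have h_int : Integrable (fun v => ff a (-2 * s₀ - 4) v) (volume.restrict (Ioi (1:ℝ))) := by
    apply integrableOn_ff
    simp only [Complex.sub_re, Complex.mul_re]
    simp; linarith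
  have h_meas' : AEStronglyMeasurable
      (fun v : ℝ => (-2 : ℂ) * (Real.log v : ℂ) * ff a (-2 * s₀ - 4) v)
      (volume.restrict (Ioi (1:ℝ))) := by
    apply AEStronglyMeasurable.mul _ (measurable_ff a _)
    apply ContinuousOn.aestronglyMeasurable _ measurableSet_Ioi
    refine ContinuousOn.mul continuousOn_const ?_
    exact fun v hv => (Complex.continuous_ofReal.continuousAt.comp
      (Real.continuousAt_log (ne_of_gt (lt_trans one_pos hv)))).continuousWithinAt
  have h_bound : ∀ᵐ v ∂(volume.restrict (Ioi (1:ℝ))), ∀ s ∈ Metric.ball s₀ ε,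
      ‖(-2 : ℂ) * (Real.log v : ℂ) * ff a (-2 * s - 4) v‖ ≤ bound v := by
    rw [ae_restrict_iff' measurableSet_Ioi]
    refine Eventually.of_forall fun v hv => fun s hsb => ?_
    have hv1 : (1:ℝ) < v := hv
    have hv0 : (0:ℝ) < v := lt_trans one_pos hv1
    have hre : -2 * s.re - 4 ≤ p := by
      have : |(s - s₀).re| ≤ ‖s - s₀‖ := Complex.abs_re_le_norm _
      rw [Metric.mem_ball, Complex.dist_eq] at hsb
      have h3 : (s - s₀).re = s.re - σ := by simp [hσ, Complex.sub_re]
      have h2 : |s.re - σ| < ε := by rw [← h3]; exact lt_of_le_of_lt this hsb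
      have := abs_lt.mp h2
      simp only [hp]; linarith [this.1]
    have hcpow : ‖(v:ℂ) ^ (-2 * s - 4)‖ ≤ v ^ p := by
      rw [Complex.norm_cpow_eq_rpow_re_of_pos hv0]
      apply Real.rpow_le_rpow_of_exponent_le hv1.le
      have : (-2 * s - 4).re = -2 * s.re - 4 := by
        simp [Complex.sub_re, Complex.mul_re]
      rw [this]; exact hre
    have hlog : (0:ℝ) ≤ Real.log v := Real.log_nonneg hv1.le
    calc ‖(-2 : ℂ) * (Real.log v : ℂ) * ff a (-2 * s - 4) v‖
        = 2 * (|Real.log v| * (‖(v:ℂ) ^ (-2 * s - 4)‖ * ‖((Real.cos (2*a*v) : ℝ) : ℂ)‖)) := by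
          simp [ff, norm_mul, Complex.norm_real]; ring
      _ ≤ 2 * (Real.log v * (v ^ p * 1)) := by
          apply mul_le_mul_of_nonneg_left _ (by norm_num)
          rw [abs_of_nonneg hlog]
          apply mul_le_mul_of_nonneg_left _ hlog
          apply mul_le_mul hcpow _ (norm_nonneg _) (Real.rpow_nonneg hv0.le _)
          rw [Complex.norm_real]; exact Real.abs_cos_le_one _
      _ = bound v := by simp [hbound]
  have bound_int : Integrable bound (volume.restrict (Ioi (1:ℝ))) := by
    set δ : ℝ := (-1 - p) / 2 with hδ
    have hδpos : 0 < δ := by simp only [hδ]; linarith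
    have hpδ : p + δ < -1 := by simp only [hδ]; linarith
    have hmaj : IntegrableOn (fun v : ℝ => (2/δ) * v ^ (p + δ)) (Ioi (1:ℝ)) :=
      (integrableOn_Ioi_rpow_of_lt hpδ one_pos).const_mul _
    apply Integrable.mono' hmaj
    · apply ContinuousOn.aestronglyMeasurable _ measurableSet_Ioi
      apply ContinuousOn.mul continuousOn_const
      apply ContinuousOn.mul
      · exact fun v hv => (Real.continuousAt_log (ne_of_gt (lt_trans one_pos hv))).continuousWithinAt
      · exact fun v hv =>
          (Real.continuousAt_rpow_const v p (Or.inl (ne_of_gt (lt_trans one_pos hv)))).continuousWithinAt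
    · rw [ae_restrict_iff' measurableSet_Ioi]
      refine Eventually.of_forall fun v hv => ?_
      have hv1 : (1:ℝ) < v := hv
      have hv0 : (0:ℝ) < v := lt_trans one_pos hv1
      have hlog : (0:ℝ) ≤ Real.log v := Real.log_nonneg hv1.le
      have h1 : ‖bound v‖ = 2 * (Real.log v * v ^ p) := by
        simp only [hbound]
        rw [Real.norm_eq_abs, abs_of_nonneg (by positivity)]
      rw [h1]
      have h2 : Real.log v ≤ v ^ δ / δ := Real.log_le_rpow_div hv0.le hδpos
      calc 2 * (Real.log v * v ^ p) ≤ 2 * (v ^ δ / δ * v ^ p) := by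
            apply mul_le_mul_of_nonneg_left _ (by norm_num)
            exact mul_le_mul_of_nonneg_right h2 (Real.rpow_nonneg hv0.le _)
        _ = (2/δ) * v ^ (p + δ) := by
            rw [Real.rpow_add hv0]; ring
  have h_diff : ∀ᵐ v ∂(volume.restrict (Ioi (1:ℝ))), ∀ s ∈ Metric.ball s₀ ε,
      HasDerivAt (fun s : ℂ => ff a (-2 * s - 4) v)
        ((-2 : ℂ) * (Real.log v : ℂ) * ff a (-2 * s - 4) v) s := by
    rw [ae_restrict_iff' measurableSet_Ioi]
    refine Eventually.of_forall fun v hv => fun s _ => ?_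
    have hv0 : (0:ℝ) < v := lt_trans one_pos hv
    have hd : HasDerivAt (fun s : ℂ => -2 * s - 4) (-2 : ℂ) s := by
      simpa using ((hasDerivAt_id s).const_mul (-2:ℂ)).sub_const 4
    have hcp := (hd.const_cpow (c := (v:ℂ)) (Or.inl (Complex.ofReal_ne_zero.mpr hv0.ne')))
    have := hcp.mul_const ((Real.cos (2*a*v) : ℝ) : ℂ)
    refine this.congr_deriv ?_
    rw [Complex.ofReal_log hv0.le]
    simp only [ff]; ring
  have main := hasDerivAt_integral_of_dominated_loc_of_deriv_le (Metric.ball_mem_nhds s₀ hεpos) h_meas h_int h_meas'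
    h_bound bound_int h_diff
  exact main.2.differentiableAt

lemma s0_re : ((-(1/2) : ℂ)).re = -(1/2 : ℝ) := by norm_num

lemma ci_eq {a : ℝ} (ha : 0 < a) {ci2a : ℝ}
    (hci : Tendsto (fun R : ℝ => -∫ t in (2 * a)..R, Real.cos t / t) atTop (𝓝 ci2a)) :
    (ci2a : ℂ) = Phi a (-(1/2)) 1 + CC a (-(1/2)) * G a (-(1/2)) := by
  have h2a : (2 * a : ℝ) ≠ 0 := by positivity
  have hs1 : (-(1/2) : ℂ) ≠ -1 := re_ne_1 (by rw [s0_re]; norm_num)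
  have hs2 : (-(1/2) : ℂ) ≠ -(3/2) := re_ne_32 (by rw [s0_re]; norm_num)
  have he : (-2 * (-(1/2) : ℂ) - 2) = -1 := by norm_num
  have stepA : ∀ R : ℝ, 1 ≤ R →
      (∫ v in (1:ℝ)..R, ff a (-2 * (-(1/2) : ℂ) - 2) v)
        = ((∫ t in (2*a)..(2*a*R), Real.cos t / t : ℝ) : ℂ) := by
    intro R hR
    have h1 : ∀ v ∈ uIcc (1:ℝ) R, ff a (-2 * (-(1/2) : ℂ) - 2) v
        = ((Real.cos (2*a*v) / v : ℝ) : ℂ) := by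
      intro v hv
      rw [uIcc_of_le hR] at hv
      have hv0 : (0:ℝ) < v := lt_of_lt_of_le one_pos hv.1
      simp only [ff, he, Complex.cpow_neg_one]
      push_cast
      rw [div_eq_mul_inv, mul_comm]
    rw [intervalIntegral.integral_congr h1, intervalIntegral.integral_ofReal]
    congr 1
    have hsub := intervalIntegral.integral_comp_mul_left
      (f := fun t : ℝ => Real.cos t / t) (a := (1:ℝ)) (b := R) (c := 2*a) h2a
    have hlhs : ∀ v : ℝ, Real.cos (2*a*v) / (2*a*v) = (2*a)⁻¹ * (Real.cos (2*a*v) / v) := by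
      intro v
      rw [mul_comm (2*a) v, ← div_div, div_eq_inv_mul]
    simp only [hlhs] at hsub
    rw [intervalIntegral.integral_const_mul] at hsub
    rw [smul_eq_mul, mul_one] at hsub
    exact mul_left_cancel₀ (inv_ne_zero h2a) hsub
  -- limits
  have hJ : Tendsto (fun R : ℝ => ∫ t in (2*a)..R, Real.cos t / t) atTop (𝓝 (-ci2a)) := by
    simpa using hci.neg
  have hcomp : Tendsto (fun R : ℝ => 2*a*R) atTop atTop :=
    Tendsto.const_mul_atTop (by positivity) tendsto_id
  have hC : Tendsto (fun R : ℝ => ((∫ t in (2*a)..(2*a*R), Real.cos t / t : ℝ) : ℂ)) atTop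
      (𝓝 ((-ci2a : ℝ) : ℂ)) :=
    (Complex.continuous_ofReal.tendsto _).comp (hJ.comp hcomp)
  have hre2 : (-2 * (-(1/2) : ℂ) - 4).re < -1 := by norm_num
  have T2 := intervalIntegral_tendsto_integral_Ioi 1 (integrableOn_ff a hre2) tendsto_id
  have T3 : Tendsto (fun R : ℝ => Phi a (-(1/2)) R - Phi a (-(1/2)) 1
      - CC a (-(1/2)) * ∫ v in (1:ℝ)..R, ff a (-2 * (-(1/2) : ℂ) - 4) v) atTop
      (𝓝 (0 - Phi a (-(1/2)) 1 - CC a (-(1/2)) * G a (-(1/2)))) :=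
    ((tendsto_Phi ha (by rw [s0_re]; norm_num)).sub tendsto_const_nhds).sub (T2.const_mul _)
  have heq : ∀ᶠ R : ℝ in atTop, ((∫ t in (2*a)..(2*a*R), Real.cos t / t : ℝ) : ℂ)
      = Phi a (-(1/2)) R - Phi a (-(1/2)) 1
        - CC a (-(1/2)) * ∫ v in (1:ℝ)..R, ff a (-2 * (-(1/2) : ℂ) - 4) v := by
    filter_upwards [eventually_ge_atTop (1:ℝ)] with R hR
    rw [← stepA R hR]
    exact key_interval ha hs1 hs2 hR
  have hfin := tendsto_nhds_unique (hC.congr' heq) T3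
  push_cast at hfin
  linear_combination -hfin

end ZBaux

end ZBaux

open ZBaux in
/-- Meromorphic continuation of
`z_B(s) = -∫₁^∞ v^{-2s-2}(2cos(2av) - 4π(α₀+α₁)a)/(πa) dv` (defined for `Re s > -1/2`):
it extends meromorphically with a simple pole at `s = -1/2` of residue `2(α₀+α₁)`
(the pole term being `4(α₀+α₁)/(2s+1) = 2(α₀+α₁)/(s+1/2)`), and finite part at
`s = -1/2` equal to `2 ci(2a)/(πa)`, where `ci(x) = -∫_x^∞ cos t/t dt` is the cosine
integral (an improper integral, given here as the limit `hci`). -/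
theorem zB_meromorphic_continuation (a α₀ α₁ : ℝ) (ha : 0 < a) (ci2a : ℝ)
    (hci : Tendsto (fun R : ℝ => -∫ t in (2 * a)..R, Real.cos t / t) atTop (𝓝 ci2a)) :
    ∃ g : ℂ → ℂ, AnalyticOn ℂ g {s : ℂ | -(3 / 2) < s.re} ∧
      (∀ s : ℂ, -(1 / 2) < s.re →
        -∫ v in Ioi (1:ℝ), (v : ℂ) ^ (-2 * s - 2) *
            (((2 * Real.cos (2 * a * v) - 4 * π * (α₀ + α₁) * a) / (π * a) : ℝ) : ℂ) =
          g s + 4 * (α₀ + α₁) / (2 * s + 1)) ∧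
      g (-(1 / 2)) = ((2 * ci2a / (π * a) : ℝ) : ℂ) := by
  have hπ : (0:ℝ) < π := Real.pi_pos
  have hπa : ((π:ℝ) : ℂ) * (a : ℂ) ≠ 0 := by
    apply mul_ne_zero <;> exact Complex.ofReal_ne_zero.mpr (by positivity)
  refine ⟨fun s => (2 / (((π:ℝ) : ℂ) * (a : ℂ))) * (Phi a s 1 + CC a s * G a s), ?_, ?_, ?_⟩
  · -- analyticity
    have hU : IsOpen {s : ℂ | -(3 / 2 : ℝ) < s.re} :=
      isOpen_lt continuous_const Complex.continuous_re
    apply DifferentiableOn.analyticOn _ hU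
    have hPhi1 : DifferentiableOn ℂ (fun s : ℂ => Phi a s 1) {s : ℂ | -(3 / 2 : ℝ) < s.re} := by
      have hfe : (fun s : ℂ => Phi a s 1)
          = fun s : ℂ => ((Real.sin (2*a) / (2*a) : ℝ) : ℂ)
            - (2*s+2) * ((Real.cos (2*a) / (4*a^2) : ℝ) : ℂ) := by
        funext s
        simp [Phi, Complex.one_cpow]
      rw [hfe]
      apply Differentiable.differentiableOn
      fun_prop
    have hCC : DifferentiableOn ℂ (CC a) {s : ℂ | -(3 / 2 : ℝ) < s.re} := by
      apply Differentiable.differentiableOn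
      unfold CC
      fun_prop
    have hG : DifferentiableOn ℂ (G a) {s : ℂ | -(3 / 2 : ℝ) < s.re} :=
      fun s hs => (differentiableAt_G ha hs).differentiableWithinAt
    exact (hPhi1.add (hCC.mul hG)).const_mul _
  · -- identity for re s > -1/2
    intro s hs
    have hs' : -(1/2 : ℝ) < s.re := hs
    have hre1 : (-2 * s - 2).re < -1 := by
      simp only [Complex.sub_re, Complex.mul_re]
      simp; linarith
    have hF := key_Ioi ha hs'
    have h2s : (2 * s + 1 : ℂ) ≠ 0 := by
      intro h
      have := congrArg Complex.re h
      simp at this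
      linarith
    have hP : (∫ v in Ioi (1:ℝ), (v:ℂ) ^ (-2 * s - 2))
        = -(1:ℂ) ^ (-2 * s - 2 + 1) / (-2 * s - 2 + 1) := by
      have := integral_Ioi_cpow_of_lt hre1 one_pos
      simpa using this
    rw [Complex.one_cpow, show (-2 * s - 2 + 1 : ℂ) = -(2*s+1) by ring,
      show (-1 / -(2*s+1) : ℂ) = 1 / (2*s+1) by rw [neg_div_neg_eq]] at hP
    have hpt : EqOn (fun v : ℝ => (v : ℂ) ^ (-2 * s - 2) *
            (((2 * Real.cos (2 * a * v) - 4 * π * (α₀ + α₁) * a) / (π * a) : ℝ) : ℂ))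
        (fun v : ℝ => ((2 / (π * a) : ℝ) : ℂ) * ff a (-2 * s - 2) v
          - ((4 * (α₀ + α₁) : ℝ) : ℂ) * (v:ℂ) ^ (-2 * s - 2)) (Ioi (1:ℝ)) := by
      intro v hv
      simp only [ff]
      push_cast
      field_simp [Complex.ofReal_ne_zero.mpr ha.ne']
    rw [setIntegral_congr_fun measurableSet_Ioi hpt]
    rw [integral_sub (((integrableOn_ff a hre1).const_mul _))
      ((integrableOn_Ioi_cpow_of_lt hre1 one_pos).const_mul _),
      MeasureTheory.integral_const_mul, MeasureTheory.integral_const_mul, hF, hP]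
    push_cast
    field_simp [h2s]
    ring
  · -- value at -1/2
    show (2 / (((π:ℝ) : ℂ) * (a : ℂ))) * (Phi a (-(1/2)) 1 + CC a (-(1/2)) * G a (-(1/2)))
      = ((2 * ci2a / (π * a) : ℝ) : ℂ)
    rw [← ci_eq ha hci]
    push_cast
    field_simp
end
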